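/- arXiv:2402.00597 — 7 statements merged into one kernel-verified Lean document; each statement's English description precedes it below -/
import Mathlib

section
/- Let s be a positive integer, let γ_1,…,γ_s be pairwise distinct real numbers with 0 < γ_k < 1, let φ_1,…,φ_s be real numbers with 0 < φ_k < π, and let c_{k1}, c_{k2} (1 ≤ k ≤ s) be real numbers. Then Σ_{k=1}^s γ_k^j [c_{k1} cos(j φ_k) + c_{k2} sin(j φ_k)] = 0 holds for every positive integer j if and only if c_{k1} = c_{k2} = 0 for all 1 ≤ k ≤ s. -/
open Complex in
lemma key {n : ℕ} (w : Fin n → ℂ) (hw : ∀ i, w i ≠ 0)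
    (hinj : Function.Injective w) (b : Fin n → ℂ)
    (h : ∀ j : ℕ, 0 < j → ∑ k, b k * w k ^ j = 0) : ∀ k, b k = 0 := by
  have hdet : (Matrix.vandermonde w).det ≠ 0 := by
    rw [Matrix.det_vandermonde]
    refine Finset.prod_ne_zero_iff.2 fun i _ => Finset.prod_ne_zero_iff.2 fun j hj => ?_
    exact sub_ne_zero.2 fun e => absurd (hinj e) (ne_of_gt (Finset.mem_Ioi.1 hj))
  have hd : (fun k => b k * w k) = 0 := by
    apply Matrix.eq_zero_of_vecMul_eq_zero hdet
    funext j
    simp only [Matrix.vecMul, Matrix.vandermonde, dotProduct, Matrix.of_apply,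
      Pi.zero_apply]
    calc ∑ k, b k * w k * w k ^ (j : ℕ) = ∑ k, b k * w k ^ ((j : ℕ) + 1) := by
          refine Finset.sum_congr rfl fun k _ => by ring
      _ = 0 := h (j + 1) (Nat.succ_pos _)
  intro k
  have := congrFun hd k
  simp only [Pi.zero_apply] at this
  exact (mul_eq_zero.1 this).resolve_right (hw k)

/-- For pairwise distinct `γ_k ∈ (0,1)` and `φ_k ∈ (0,π)`,
`∑_{k=1}^s γ_k^j [c_{k1} cos(jφ_k) + c_{k2} sin(jφ_k)] = 0` for every positive
integer `j` iff all `c_{k1} = c_{k2} = 0`. -/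
theorem stmt_1 (s : ℕ) (hs : 0 < s) (gam phi : Fin s → ℝ)
    (hgam : ∀ k, 0 < gam k ∧ gam k < 1)
    (hphi : ∀ k, 0 < phi k ∧ phi k < Real.pi)
    (hinj : Function.Injective gam) (c1 c2 : Fin s → ℝ) :
    (∀ j : ℕ, 0 < j →
        ∑ k, gam k ^ j * (c1 k * Real.cos (j * phi k) + c2 k * Real.sin (j * phi k)) = 0) ↔
      ∀ k, c1 k = 0 ∧ c2 k = 0 := by
  constructor
  swap
  · intro h j hj
    refine Finset.sum_eq_zero fun k _ => ?_
    rw [(h k).1, (h k).2]; ring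
  intro h
  set a : Fin s → ℂ := fun k => (c1 k : ℂ) - (c2 k : ℂ) * Complex.I with ha
  set z : Fin s → ℂ := fun k => (gam k : ℂ) * Complex.exp ((phi k : ℂ) * Complex.I) with hz
  have hsin : ∀ k, 0 < Real.sin (phi k) := fun k =>
    Real.sin_pos_of_pos_of_lt_pi (hphi k).1 (hphi k).2
  have habs : ∀ k, ‖z k‖ = gam k := by
    intro k
    simp [hz, Complex.norm_exp_ofReal_mul_I, abs_of_pos (hgam k).1]
  have hzne : ∀ k, z k ≠ 0 := by
    intro k hk
    have := habs k
    rw [hk] at this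
    simp at this
    exact absurd this.symm ((hgam k).1.ne')
  have hzim : ∀ k, 0 < (z k).im := by
    intro k
    have : z k = (gam k : ℂ) * (↑(Real.cos (phi k)) + ↑(Real.sin (phi k)) * Complex.I) := by
      rw [hz]
      simp [Complex.exp_mul_I, ← Complex.ofReal_cos, ← Complex.ofReal_sin]
    rw [this]
    simp [Complex.mul_im]
    exact mul_pos (hgam k).1 (hsin k)
  -- powers of z
  have hzpow : ∀ k (j : ℕ), z k ^ j =
      (↑(gam k ^ j) : ℂ) * (↑(Real.cos (j * phi k)) + ↑(Real.sin (j * phi k)) * Complex.I) := by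
    intro k j
    rw [hz]
    rw [mul_pow, ← Complex.exp_nat_mul]
    have e1 : ((j : ℂ) * ((phi k : ℂ) * Complex.I)) = (((j : ℝ) * phi k : ℝ) : ℂ) * Complex.I := by
      push_cast; ring
    rw [e1, Complex.exp_mul_I, ← Complex.ofReal_cos, ← Complex.ofReal_sin]
    push_cast
    ring
  -- the real part identity
  have hre : ∀ k (j : ℕ), a k * z k ^ j + (starRingEnd ℂ) (a k) * ((starRingEnd ℂ) (z k)) ^ j =
      ((2 * (gam k ^ j * (c1 k * Real.cos (j * phi k) + c2 k * Real.sin (j * phi k))) : ℝ) : ℂ) := by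
    intro k j
    rw [← map_pow, ← map_mul, Complex.add_conj]
    congr 1
    rw [hzpow, ha]
    simp only [Complex.mul_re, Complex.mul_im, Complex.sub_re, Complex.sub_im,
      Complex.add_re, Complex.add_im, Complex.ofReal_re, Complex.ofReal_im,
      Complex.I_re, Complex.I_im]
    ring
  -- build the doubled family
  set W : Fin s ⊕ Fin s → ℂ := Sum.elim z (fun k => (starRingEnd ℂ) (z k)) with hW
  set B : Fin s ⊕ Fin s → ℂ := Sum.elim a (fun k => (starRingEnd ℂ) (a k)) with hB
  have hWne : ∀ p, W p ≠ 0 := by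
    rintro (k | k) <;> simp [hW, hzne k]
  have hWinj : Function.Injective W := by
    rintro (k | k) (l | l) hkl <;> simp only [hW, Sum.elim_inl, Sum.elim_inr] at hkl
    · have : gam k = gam l := by rw [← habs k, ← habs l, hkl]
      exact congrArg Sum.inl (hinj this)
    · exfalso
      have h1 := hzim k
      have h2 : ((starRingEnd ℂ) (z l)).im = -(z l).im := Complex.conj_im _
      rw [hkl, h2] at h1
      linarith [hzim l]
    · exfalso
      have h1 := hzim l
      have h2 : ((starRingEnd ℂ) (z k)).im = -(z k).im := Complex.conj_im _
      rw [← hkl, h2] at h1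
      linarith [hzim k]
    · have : z k = z l := by
        have := congrArg (starRingEnd ℂ) hkl
        simpa using this
      have : gam k = gam l := by rw [← habs k, ← habs l, this]
      exact congrArg Sum.inr (hinj this)
  have hsum : ∀ j : ℕ, 0 < j → ∑ p : Fin s ⊕ Fin s, B p * W p ^ j = 0 := by
    intro j hj
    rw [Fintype.sum_sum_type]
    simp only [hB, hW, Sum.elim_inl, Sum.elim_inr]
    rw [← Finset.sum_add_distrib]
    calc ∑ k, (a k * z k ^ j + (starRingEnd ℂ) (a k) * ((starRingEnd ℂ) (z k)) ^ j)
        = ∑ k, ((2 * (gam k ^ j * (c1 k * Real.cos (j * phi k) + c2 k * Real.sin (j * phi k))) : ℝ) : ℂ) :=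
          Finset.sum_congr rfl fun k _ => hre k j
      _ = ((2 : ℝ) : ℂ) * ((∑ k, gam k ^ j * (c1 k * Real.cos (j * phi k) + c2 k * Real.sin (j * phi k)) : ℝ) : ℂ) := by
          push_cast
          rw [Finset.mul_sum]
      _ = 0 := by rw [h j hj]; simp
  -- transport to Fin (s+s)
  have hzero : ∀ p, B p = 0 := by
    have := key (W ∘ finSumFinEquiv.symm)
      (fun i => hWne _)
      (hWinj.comp finSumFinEquiv.symm.injective)
      (B ∘ finSumFinEquiv.symm)
      (by
        intro j hj
        rw [← hsum j hj]
        exact Fintype.sum_equiv finSumFinEquiv.symm _ _ (fun i => rfl))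
    intro p
    have := this (finSumFinEquiv p)
    simpa using this
  intro k
  have := hzero (Sum.inl k)
  simp only [hB, Sum.elim_inl, ha] at this
  have h1 : ((c1 k : ℂ) - (c2 k : ℂ) * Complex.I).re = 0 := by rw [this]; simp
  have h2 : ((c1 k : ℂ) - (c2 k : ℂ) * Complex.I).im = 0 := by rw [this]; simp
  simp at h1 h2
  exact ⟨h1, by linarith [h2]⟩
end

section
/- Let φ_1, φ_2 be real numbers with 0 < φ_1 < π and 0 < φ_2 < π, and let c_{11}, c_{12}, c_{21}, c_{22} be real numbers with (c_{11}, c_{12}) ≠ (0, 0). Then c_{11} cos(j φ_1) + c_{12} sin(j φ_1) = c_{21} cos(j φ_2) + c_{22} sin(j φ_2) holds for every positive integer j if and only if φ_1 = φ_2, c_{11} = c_{21} and c_{12} = c_{22}. -/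
private lemma keyrec (c d φ : ℝ) (j : ℕ) :
    c * Real.cos ((j + 2 : ℕ) * φ) + d * Real.sin ((j + 2 : ℕ) * φ)
      + (c * Real.cos (j * φ) + d * Real.sin (j * φ))
    = 2 * Real.cos φ * (c * Real.cos ((j + 1 : ℕ) * φ) + d * Real.sin ((j + 1 : ℕ) * φ)) := by
  push_cast
  have e1 : ((j : ℝ) + 2) * φ = ((j : ℝ) + 1) * φ + φ := by ring
  have e2 : (j : ℝ) * φ = ((j : ℝ) + 1) * φ - φ := by ring
  rw [e1, e2, Real.cos_add, Real.cos_sub, Real.sin_add, Real.sin_sub]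
  ring

/-- For `φ_1, φ_2 ∈ (0,π)` and `(c_{11}, c_{12}) ≠ (0,0)`,
`c_{11} cos(jφ_1) + c_{12} sin(jφ_1) = c_{21} cos(jφ_2) + c_{22} sin(jφ_2)` for
every positive integer `j` iff `φ_1 = φ_2`, `c_{11} = c_{21}` and `c_{12} = c_{22}`. -/
theorem stmt_2 (phi1 phi2 : ℝ)
    (h1 : 0 < phi1 ∧ phi1 < Real.pi) (h2 : 0 < phi2 ∧ phi2 < Real.pi)
    (c11 c12 c21 c22 : ℝ) (hc : ¬(c11 = 0 ∧ c12 = 0)) :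
    (∀ j : ℕ, 0 < j →
        c11 * Real.cos (j * phi1) + c12 * Real.sin (j * phi1) =
          c21 * Real.cos (j * phi2) + c22 * Real.sin (j * phi2)) ↔
      (phi1 = phi2 ∧ c11 = c21 ∧ c12 = c22) := by
  obtain ⟨h1a, h1b⟩ := h1
  obtain ⟨h2a, h2b⟩ := h2
  have hs1 : Real.sin phi1 ≠ 0 := ne_of_gt (Real.sin_pos_of_pos_of_lt_pi h1a h1b)
  constructor
  · intro h
    by_cases hcos : Real.cos phi1 = Real.cos phi2
    · have hφ : phi1 = phi2 := by
        exact Real.injOn_cos ⟨le_of_lt h1a, le_of_lt h1b⟩ ⟨le_of_lt h2a, le_of_lt h2b⟩ hcos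
      subst hφ
      refine ⟨rfl, ?_⟩
      have e1 := h 1 (by norm_num)
      have e2 := h 2 (by norm_num)
      push_cast at e1 e2
      rw [one_mul] at e1
      rw [Real.cos_two_mul, Real.sin_two_mul] at e2
      have ha : c11 - c21 = 0 := by
        linear_combination 2 * Real.cos phi1 * e1 - e2
      have hb : c12 - c22 = 0 := by
        have : (c12 - c22) * Real.sin phi1 = 0 := by
          linear_combination e1 - Real.cos phi1 * ha
        rcases mul_eq_zero.1 this with h' | h'
        · exact h'
        · exact absurd h' hs1
      constructor <;> linarith
    · -- LHS vanishes for all j ≥ 2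
      exfalso
      have hzero : ∀ j : ℕ, c11 * Real.cos ((j + 2 : ℕ) * phi1) + c12 * Real.sin ((j + 2 : ℕ) * phi1) = 0 := by
        intro j
        have r1 := keyrec c11 c12 phi1 (j + 1)
        have r2 := keyrec c21 c22 phi2 (j + 1)
        have e1 := h (j + 1) (by omega)
        have e2 := h (j + 2) (by omega)
        have e3 := h (j + 3) (by omega)
        have hj32 : j + 1 + 2 = j + 3 := by omega
        have hj21 : j + 1 + 1 = j + 2 := by omega
        rw [hj32, hj21] at r1 r2
        have key : (Real.cos phi1 - Real.cos phi2) *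
            (c11 * Real.cos ((j + 2 : ℕ) * phi1) + c12 * Real.sin ((j + 2 : ℕ) * phi1)) = 0 := by
          linear_combination (-(1:ℝ)/2) * r1 + ((1:ℝ)/2) * r2 + ((1:ℝ)/2) * e3
            + ((1:ℝ)/2) * e1 - Real.cos phi2 * e2
        rcases mul_eq_zero.1 key with h' | h'
        · exact absurd (by linarith : Real.cos phi1 = Real.cos phi2) hcos
        · exact h'
      have E2 := hzero 0
      have E3 := hzero 1
      norm_num at E2 E3
      have hD : Real.sin phi1 = Real.sin (3 * phi1) * Real.cos (2 * phi1)
          - Real.cos (3 * phi1) * Real.sin (2 * phi1) := by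
        have : phi1 = 3 * phi1 - 2 * phi1 := by ring
        rw [this, Real.sin_sub]; ring_nf
      have hc11 : c11 = 0 := by
        have : c11 * Real.sin phi1 = 0 := by
          rw [hD]; linear_combination Real.sin (3 * phi1) * E2 - Real.sin (2 * phi1) * E3
        rcases mul_eq_zero.1 this with h' | h'
        · exact h'
        · exact absurd h' hs1
      have hc12 : c12 = 0 := by
        have : c12 * Real.sin phi1 = 0 := by
          rw [hD]; linear_combination Real.cos (2 * phi1) * E3 - Real.cos (3 * phi1) * E2
        rcases mul_eq_zero.1 this with h' | h'
        · exact h'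
        · exact absurd h' hs1
      exact hc ⟨hc11, hc12⟩
  · rintro ⟨rfl, rfl, rfl⟩
    intro j _
    rfl
end

section
/- Let r and s be nonnegative integers, let λ_1,…,λ_r be pairwise distinct nonzero real numbers with |λ_k| < 1, let γ_1,…,γ_s be pairwise distinct real numbers with 0 < γ_k < 1, let φ_1,…,φ_s be real numbers with 0 < φ_k < π, and let c_1,…,c_r, a_1,…,a_s, b_1,…,b_s be real numbers. If Σ_{k=1}^r c_k λ_k^j + Σ_{k=1}^s γ_k^j [a_k cos(j φ_k) + b_k sin(j φ_k)] = 0 for every positive integer j (empty sums are zero), then c_k = 0 for all 1 ≤ k ≤ r and a_k = b_k = 0 for all 1 ≤ k ≤ s. -/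
open Complex in
lemma key_vand {ι : Type*} [Fintype ι] (w : ι → ℂ) (h0 : ∀ i, w i ≠ 0)
    (hinj : Function.Injective w) (d : ι → ℂ)
    (h : ∀ j : ℕ, 0 < j → ∑ i, d i * w i ^ j = 0) : ∀ i, d i = 0 := by
  classical
  let e := (Fintype.equivFin ι).symm
  have hv : (fun i : Fin (Fintype.card ι) => d (e i) * w (e i)) = 0 := by
    apply Matrix.eq_zero_of_forall_pow_sum_mul_pow_eq_zero
      (f := fun i => w (e i)) (hinj.comp e.injective)
    intro i
    have := h ((i : ℕ) + 1) (Nat.succ_pos _)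
    rw [← Equiv.sum_comp e (fun x => d x * w x ^ ((i : ℕ) + 1))] at this
    rw [← this]
    apply Finset.sum_congr rfl
    intro j _
    ring
  intro i
  have := congrFun hv (e.symm i)
  simp only [Equiv.apply_symm_apply, Pi.zero_apply] at this
  rcases mul_eq_zero.mp this with h' | h'
  · exact h'
  · exact absurd h' (h0 i)

lemma conj_aux' (x y : ℂ) (hx : x = (starRingEnd ℂ) x) (hy : y = (starRingEnd ℂ) y) :
    (starRingEnd ℂ) (x + y * Complex.I) = x - y * Complex.I := by
  rw [map_add, map_mul, Complex.conj_I, ← hx, ← hy]; ring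

lemma quad_aux (x y A B : ℂ) :
    (A - B * Complex.I) / 2 * (x + y * Complex.I) +
      (A + B * Complex.I) / 2 * (x - y * Complex.I) = A * x + B * y := by
  linear_combination (-B * y) * Complex.I_sq

/-- combined linear independence of `λ_k^j` and `γ_k^j cos/sin(jφ_k)`. -/
theorem stmt_6 (r s : ℕ) (lam : Fin r → ℝ)
    (hne : ∀ k, lam k ≠ 0) (hlt : ∀ k, |lam k| < 1) (hlaminj : Function.Injective lam)
    (gam phi : Fin s → ℝ)
    (hgam : ∀ k, 0 < gam k ∧ gam k < 1)
    (hphi : ∀ k, 0 < phi k ∧ phi k < Real.pi)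
    (hgaminj : Function.Injective gam)
    (c : Fin r → ℝ) (a b : Fin s → ℝ)
    (h : ∀ j : ℕ, 0 < j →
        (∑ k, c k * lam k ^ j) +
          ∑ k, gam k ^ j * (a k * Real.cos (j * phi k) + b k * Real.sin (j * phi k)) = 0) :
    (∀ k, c k = 0) ∧ ∀ k, a k = 0 ∧ b k = 0 := by
  classical
  set z : Fin s → ℂ := fun k => (gam k : ℂ) * Complex.exp (phi k * Complex.I) with hzdef
  have hsin : ∀ k, 0 < Real.sin (phi k) := fun k =>
    Real.sin_pos_of_pos_of_lt_pi (hphi k).1 (hphi k).2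
  have hzpow : ∀ k (j : ℕ), z k ^ j =
      ((gam k ^ j * Real.cos (j * phi k) : ℝ) : ℂ) +
      ((gam k ^ j * Real.sin (j * phi k) : ℝ) : ℂ) * Complex.I := by
    intro k j
    rw [hzdef]
    simp only [mul_pow, ← Complex.exp_nat_mul]
    rw [show ((j : ℂ) * ((phi k : ℝ) * Complex.I)) = ((j * phi k : ℝ) : ℂ) * Complex.I by
      push_cast; ring]
    rw [Complex.exp_mul_I]
    push_cast [Complex.ofReal_cos, Complex.ofReal_sin]
    ring
  have hzim : ∀ k, (z k).im = gam k * Real.sin (phi k) := by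
    intro k
    have := hzpow k 1
    simp only [pow_one, mul_one] at this
    rw [this]
    simp [Complex.sin_ofReal_re, Complex.cos_ofReal_re]
  have hzabs : ∀ k, ‖z k‖ = gam k := by
    intro k
    rw [hzdef]
    simp [Complex.norm_exp, abs_of_pos (hgam k).1]
  set w : (Fin r ⊕ (Fin s ⊕ Fin s)) → ℂ :=
    Sum.elim (fun k => (lam k : ℂ))
      (Sum.elim z (fun k => (starRingEnd ℂ) (z k))) with hwdef
  set d : (Fin r ⊕ (Fin s ⊕ Fin s)) → ℂ :=
    Sum.elim (fun k => (c k : ℂ))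
      (Sum.elim (fun k => ((a k : ℂ) - (b k : ℂ) * Complex.I) / 2)
        (fun k => ((a k : ℂ) + (b k : ℂ) * Complex.I) / 2)) with hddef
  have himpos : ∀ k, 0 < (z k).im := fun k => by
    rw [hzim k]; exact mul_pos (hgam k).1 (hsin k)
  have h0 : ∀ i, w i ≠ 0 := by
    rintro (k | k | k)
    · simp only [hwdef, Sum.elim_inl]
      exact Complex.ofReal_ne_zero.mpr (hne k)
    · simp only [hwdef, Sum.elim_inl, Sum.elim_inr]
      intro hzz
      have := himpos k
      rw [hzz] at this
      simp at this
    · simp only [hwdef, Sum.elim_inl, Sum.elim_inr]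
      intro hzz
      rw [map_eq_zero] at hzz
      have := himpos k
      rw [hzz] at this
      simp at this
  have hinj : Function.Injective w := by
    rintro (i | i | i) (j | j | j) hij <;>
      simp only [hwdef, Sum.elim_inl, Sum.elim_inr] at hij
    · exact congrArg Sum.inl (hlaminj (Complex.ofReal_injective hij))
    · exfalso
      have h1 := congrArg Complex.im hij
      simp only [Complex.ofReal_im] at h1
      linarith [himpos j]
    · exfalso
      have h1 := congrArg Complex.im hij
      simp only [Complex.ofReal_im, Complex.conj_im] at h1
      linarith [himpos j]
    · exfalso
      have h1 := congrArg Complex.im hij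
      simp only [Complex.ofReal_im] at h1
      linarith [himpos i]
    · have := congrArg (‖·‖) hij
      rw [hzabs i, hzabs j] at this
      exact congrArg (Sum.inr ∘ Sum.inl) (hgaminj this)
    · exfalso
      have h1 := congrArg Complex.im hij
      rw [Complex.conj_im] at h1
      linarith [himpos i, himpos j]
    · exfalso
      have h1 := congrArg Complex.im hij
      simp only [Complex.ofReal_im, Complex.conj_im] at h1
      linarith [himpos i]
    · exfalso
      have h1 := congrArg Complex.im hij
      rw [Complex.conj_im] at h1
      linarith [himpos i, himpos j]
    · have hzz : z i = z j := by
        have := congrArg (starRingEnd ℂ) hij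
        simpa using this
      have := congrArg (‖·‖) hzz
      rw [hzabs i, hzabs j] at this
      exact congrArg (Sum.inr ∘ Sum.inr) (hgaminj this)
  have hsum : ∀ j : ℕ, 0 < j → ∑ i, d i * w i ^ j = 0 := by
    intro j hj
    rw [Fintype.sum_sum_type, Fintype.sum_sum_type]
    have hterm : ∀ k : Fin s,
        d (Sum.inr (Sum.inl k)) * w (Sum.inr (Sum.inl k)) ^ j +
        d (Sum.inr (Sum.inr k)) * w (Sum.inr (Sum.inr k)) ^ j =
        ((gam k ^ j * (a k * Real.cos (j * phi k) + b k * Real.sin (j * phi k)) : ℝ) : ℂ) := by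
      intro k
      simp only [hwdef, hddef, Sum.elim_inl, Sum.elim_inr]
      rw [← map_pow, hzpow k j,
        conj_aux' _ _ (by rw [Complex.conj_ofReal]) (by rw [Complex.conj_ofReal]),
        quad_aux]
      push_cast
      ring
    have e1 : ∑ k, d (Sum.inl k) * w (Sum.inl k) ^ j =
        ((∑ k, c k * lam k ^ j : ℝ) : ℂ) := by
      rw [Complex.ofReal_sum]
      apply Finset.sum_congr rfl
      intro k _
      simp only [hwdef, hddef, Sum.elim_inl]
      push_cast
      ring
    have e2 : (∑ k, d (Sum.inr (Sum.inl k)) * w (Sum.inr (Sum.inl k)) ^ j) +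
        ∑ k, d (Sum.inr (Sum.inr k)) * w (Sum.inr (Sum.inr k)) ^ j =
        ((∑ k, gam k ^ j * (a k * Real.cos (j * phi k) + b k * Real.sin (j * phi k)) : ℝ) : ℂ) := by
      rw [← Finset.sum_add_distrib, Complex.ofReal_sum]
      exact Finset.sum_congr rfl fun k _ => hterm k
    rw [e1, e2, ← Complex.ofReal_add, h j hj, Complex.ofReal_zero]
  have hd0 := key_vand w h0 hinj d hsum
  refine ⟨fun k => ?_, fun k => ?_⟩
  · have := hd0 (Sum.inl k)
    simp only [hddef, Sum.elim_inl] at this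
    exact_mod_cast this
  · have h1 := hd0 (Sum.inr (Sum.inl k))
    simp only [hddef, Sum.elim_inl, Sum.elim_inr, div_eq_zero_iff] at h1
    have h2 : (a k : ℂ) - (b k : ℂ) * Complex.I = 0 := by
      rcases h1 with h1 | h1
      · exact h1
      · norm_num at h1
    rw [Complex.ext_iff] at h2
    simp at h2
    exact h2
end

section
/- Assume in addition that λ_1,…,λ_r are pairwise distinct and γ_1,…,γ_s are pairwise distinct. If Φ_i is the m×m zero matrix for every integer i ≥ 1, then G_{0,k} = 0 for all 1 ≤ k ≤ r and G_{1,k} = G_{2,k} = 0 for all 1 ≤ k ≤ s. -/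
open Complex

private lemma vand_fin {N : ℕ} (z c : Fin N → ℂ) (hz : Function.Injective z)
    (h : ∀ n : ℕ, ∑ k, c k * z k ^ n = 0) : ∀ k, c k = 0 := by
  have := Matrix.eq_zero_of_forall_pow_sum_mul_pow_eq_zero (f := z) (v := c) hz
    (fun i => h i.val)
  intro k; exact congrFun this k

private lemma vand_gen {ι : Type*} [Fintype ι] (z c : ι → ℂ) (hz : Function.Injective z)
    (h : ∀ n : ℕ, ∑ k, c k * z k ^ n = 0) : ∀ k, c k = 0 := by
  let e := (Fintype.equivFin ι).symm
  have := vand_fin (z ∘ e) (c ∘ e) (hz.comp e.injective) (fun n => by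
    rw [← h n]; exact Fintype.sum_equiv e _ _ (fun k => rfl))
  intro k
  simpa using this (e.symm k)

private lemma scalar_key {r s : ℕ} (lam : Fin r → ℝ) (gam phi : Fin s → ℝ)
    (a : Fin r → ℝ) (b c : Fin s → ℝ)
    (hlam0 : ∀ k, lam k ≠ 0) (hgam0 : ∀ k, 0 < gam k)
    (hphi : ∀ k, 0 < phi k ∧ phi k < Real.pi)
    (hlaminj : Function.Injective lam) (hgaminj : Function.Injective gam)
    (h : ∀ n : ℕ, ∑ k, a k * lam k ^ n
      + ∑ k, gam k ^ n * (Real.cos (n * phi k) * b k + Real.sin (n * phi k) * c k) = 0) :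
    (∀ k, a k = 0) ∧ ∀ k, b k = 0 ∧ c k = 0 := by
  set g : Fin s → ℂ := fun k => (gam k : ℂ) * Complex.exp (phi k * I) with hg
  have gpow : ∀ (k : Fin s) (n : ℕ), g k ^ n
      = ((gam k ^ n * Real.cos (n * phi k) : ℝ) : ℂ)
        + ((gam k ^ n * Real.sin (n * phi k) : ℝ) : ℂ) * I := by
    intro k n
    rw [hg]
    simp only
    rw [mul_pow, ← Complex.exp_nat_mul,
      show (n : ℂ) * ((phi k : ℂ) * I) = ((n * phi k : ℝ) : ℂ) * I by push_cast; ring,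
      Complex.exp_mul_I]
    push_cast
    ring
  have gim : ∀ k, (g k).im = gam k * Real.sin (phi k) := by
    intro k
    have := gpow k 1
    simp only [pow_one, Nat.cast_one, one_mul] at this
    rw [this]
    simp [Complex.sin_ofReal_re]
  have gimpos : ∀ k, 0 < (g k).im := by
    intro k
    rw [gim k]
    exact mul_pos (hgam0 k) (Real.sin_pos_of_pos_of_lt_pi (hphi k).1 (hphi k).2)
  have gabs : ∀ k, ‖g k‖ = gam k := by
    intro k
    rw [hg]
    simp only [norm_mul, Complex.norm_real, Real.norm_eq_abs, Complex.norm_exp_ofReal_mul_I, mul_one]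
    exact abs_of_pos (hgam0 k)
  set z : Fin r ⊕ Fin s ⊕ Fin s → ℂ :=
    Sum.elim (fun k => (lam k : ℂ))
      (Sum.elim g (fun k => (starRingEnd ℂ) (g k))) with hz
  set co : Fin r ⊕ Fin s ⊕ Fin s → ℂ :=
    Sum.elim (fun k => (a k : ℂ))
      (Sum.elim (fun k => ((b k : ℂ) - (c k : ℂ) * I) / 2)
        (fun k => ((b k : ℂ) + (c k : ℂ) * I) / 2)) with hco
  have hzinj : Function.Injective z := by
    have labs : ∀ (j : Fin r) (k : Fin s), (lam j : ℂ) ≠ g k := by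
      intro j k he
      have h2 := congrArg Complex.im he
      simp only [Complex.ofReal_im] at h2
      linarith [gimpos k]
    have labs' : ∀ (j : Fin r) (k : Fin s), (lam j : ℂ) ≠ (starRingEnd ℂ) (g k) := by
      intro j k he
      have h2 := congrArg Complex.im he
      simp only [Complex.ofReal_im, Complex.conj_im] at h2
      linarith [gimpos k]
    have gconj : ∀ (j k : Fin s), g j ≠ (starRingEnd ℂ) (g k) := by
      intro j k he
      have : (g j).im = ((starRingEnd ℂ) (g k)).im := by rw [he]
      simp only [Complex.conj_im] at this
      linarith [gimpos j, gimpos k]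
    have ginj : Function.Injective g := by
      intro j k he
      apply hgaminj
      rw [← gabs j, ← gabs k, he]
    rintro (j | j | j) (k | k | k) he <;> simp only [hz, Sum.elim_inl, Sum.elim_inr] at he
    · exact congrArg Sum.inl (hlaminj (by exact_mod_cast he))
    · exact absurd he (labs j k)
    · exact absurd he (labs' j k)
    · exact absurd he.symm (labs k j)
    · exact congrArg Sum.inr (congrArg Sum.inl (ginj he))
    · exact absurd he (gconj j k)
    · exact absurd he.symm (labs' k j)
    · exact absurd he.symm (gconj k j)
    · exact congrArg Sum.inr (congrArg Sum.inr (ginj ((starRingEnd ℂ).injective he)))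
  have hsum : ∀ n : ℕ, ∑ k, co k * z k ^ n = 0 := by
    intro n
    rw [Fintype.sum_sum_type, Fintype.sum_sum_type, ← Finset.sum_add_distrib]
    have e1 : ∀ k : Fin s,
        co (.inr (.inl k)) * z (.inr (.inl k)) ^ n
          + co (.inr (.inr k)) * z (.inr (.inr k)) ^ n
        = ((gam k ^ n * (Real.cos (n * phi k) * b k + Real.sin (n * phi k) * c k) : ℝ) : ℂ) := by
      intro k
      simp only [hz, hco, Sum.elim_inl, Sum.elim_inr]
      rw [← map_pow, gpow k n]
      simp only [map_add, map_mul, Complex.conj_ofReal, Complex.conj_I]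
      push_cast
      ring_nf
      rw [Complex.I_sq]
      ring
    rw [Finset.sum_congr rfl (fun k _ => e1 k)]
    have e0 : ∀ k : Fin r, co (.inl k) * z (.inl k) ^ n
        = ((a k * lam k ^ n : ℝ) : ℂ) := by
      intro k
      simp only [hz, hco, Sum.elim_inl]
      push_cast
      ring
    rw [Finset.sum_congr rfl (fun k _ => e0 k)]
    rw [← Complex.ofReal_sum, ← Complex.ofReal_sum, ← Complex.ofReal_add, h n,
      Complex.ofReal_zero]
  have hv := vand_gen z co hzinj hsum
  constructor
  · intro k
    have := hv (.inl k)
    simp only [hco, Sum.elim_inl, Complex.ofReal_eq_zero] at this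
    exact this
  · intro k
    have h1 := hv (.inr (.inl k))
    simp only [hco, Sum.elim_inl, Sum.elim_inr, div_eq_zero_iff, OfNat.ofNat_ne_zero,
      or_false] at h1
    have hre := congrArg Complex.re h1
    have him := congrArg Complex.im h1
    simp at hre him
    exact ⟨hre, him⟩


/-- The coefficient matrix `Φ_i` of the proposed multivariate GARCH model, for `i ≥ 1`:
`Φ_i = ∑_{k=1}^r λ_k^{i−1} G_{0,k}
  + ∑_{k=1}^s γ_k^{i−1} [cos((i−1)φ_k) G_{1,k} + sin((i−1)φ_k) G_{2,k}]`. -/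
noncomputable def PhiMat (m r s : ℕ) (lam : Fin r → ℝ) (gam phi : Fin s → ℝ)
    (G0 : Fin r → Matrix (Fin m) (Fin m) ℝ)
    (G1 G2 : Fin s → Matrix (Fin m) (Fin m) ℝ) (i : ℕ) :
    Matrix (Fin m) (Fin m) ℝ :=
  (∑ k, lam k ^ (i - 1) • G0 k) +
    ∑ k, gam k ^ (i - 1) •
      (Real.cos ((i - 1 : ℕ) * phi k) • G1 k + Real.sin ((i - 1 : ℕ) * phi k) • G2 k)

/-- if `Φ_i = 0` for every `i ≥ 1`, then all coefficient matrices vanish. -/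
theorem stmt_7 (m r s : ℕ) (hm : 0 < m)
    (lam : Fin r → ℝ) (gam phi : Fin s → ℝ)
    (G0 : Fin r → Matrix (Fin m) (Fin m) ℝ)
    (G1 G2 : Fin s → Matrix (Fin m) (Fin m) ℝ)
    (hlam0 : ∀ k, 0 < |lam k|) (hlam1 : ∀ k, |lam k| < 1)
    (hgam0 : ∀ k, 0 < gam k) (hgam1 : ∀ k, gam k < 1)
    (hphi : ∀ k, 0 < phi k ∧ phi k < Real.pi)
    (hlaminj : Function.Injective lam) (hgaminj : Function.Injective gam)
    (hzero : ∀ i : ℕ, 1 ≤ i → PhiMat m r s lam gam phi G0 G1 G2 i = 0) :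
    (∀ k, G0 k = 0) ∧ ∀ k, G1 k = 0 ∧ G2 k = 0 := by
  have key : ∀ x y : Fin m, (∀ k, G0 k x y = 0) ∧ ∀ k, G1 k x y = 0 ∧ G2 k x y = 0 := by
    intro x y
    apply scalar_key lam gam phi (fun k => G0 k x y) (fun k => G1 k x y) (fun k => G2 k x y)
      (fun k => abs_pos.mp (hlam0 k)) hgam0 hphi hlaminj hgaminj
    intro n
    have := hzero (n + 1) (by omega)
    have := congrFun (congrFun this x) y
    simp only [PhiMat, Nat.add_sub_cancel, Matrix.add_apply, Matrix.sum_apply,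
      Matrix.smul_apply, smul_eq_mul, Matrix.zero_apply] at this
    have e : ∑ k : Fin r, G0 k x y * lam k ^ n = ∑ k : Fin r, lam k ^ n * G0 k x y :=
      Finset.sum_congr rfl fun k _ => mul_comm _ _
    rw [e]
    exact this
  refine ⟨fun k => Matrix.ext fun x y => (key x y).1 k,
    fun k => ⟨Matrix.ext fun x y => ((key x y).2 k).1,
      Matrix.ext fun x y => ((key x y).2 k).2⟩⟩
end

section
/- Assume that λ_1,…,λ_r are pairwise distinct, γ_1,…,γ_s are pairwise distinct, λ′_1,…,λ′_{r′} are pairwise distinct, γ′_1,…,γ′_{s′} are pairwise distinct, and that all of the matrices G_{0,k} (1 ≤ k ≤ r), G_{1,k}, G_{2,k} (1 ≤ k ≤ s), G′_{0,k} (1 ≤ k ≤ r′), G′_{1,k}, G′_{2,k} (1 ≤ k ≤ s′) are nonzero. If Φ_i = Φ′_i for every integer i ≥ 1, then r = r′ and s = s′ (this is the identifiability of the order (r, s), the core of Proposition 1(i)). -/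
open Finset Polynomial in
lemma sum_pow_eq_zero {S : Finset ℂ} {c : ℂ → ℂ}
    (h : ∀ n : ℕ, ∑ v ∈ S, c v * v ^ n = 0) : ∀ v ∈ S, c v = 0 := by
  intro v hv
  set p : Polynomial ℂ := ∏ u ∈ S.erase v, (X - C u) with hp
  have hev : ∀ u : ℂ, p.eval u = ∑ n ∈ Finset.range (p.natDegree + 1), p.coeff n * u ^ n := by
    intro u; rw [Polynomial.eval_eq_sum_range]
  have key : ∑ u ∈ S, c u * p.eval u = 0 := by
    calc ∑ u ∈ S, c u * p.eval u
        = ∑ n ∈ Finset.range (p.natDegree + 1), p.coeff n * ∑ u ∈ S, c u * u ^ n := by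
          simp_rw [hev, Finset.mul_sum]
          rw [Finset.sum_comm]
          refine Finset.sum_congr rfl fun u _ => Finset.sum_congr rfl fun n _ => by ring
      _ = 0 := by simp [h]
  rw [Finset.sum_eq_single v] at key
  · have hpv : p.eval v ≠ 0 := by
      rw [hp, Polynomial.eval_prod]
      refine Finset.prod_ne_zero_iff.2 fun u hu => ?_
      simp only [Polynomial.eval_sub, Polynomial.eval_X, Polynomial.eval_C, sub_ne_zero]
      exact (Finset.ne_of_mem_erase hu).symm
    exact (mul_eq_zero.1 key).resolve_right hpv
  · intro u hu hne
    have : p.eval u = 0 := by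
      rw [hp, Polynomial.eval_prod]
      refine Finset.prod_eq_zero (Finset.mem_erase.2 ⟨hne, hu⟩) ?_
      simp
    simp [this]
  · exact fun h' => absurd hv h'

lemma fiber_sum_eq_zero {T : Type*} [Fintype T] [DecidableEq T] (mu c : T → ℂ)
    (h : ∀ n : ℕ, ∑ t, c t * mu t ^ n = 0) (v : ℂ) :
    ∑ t ∈ Finset.univ.filter (fun t => mu t = v), c t = 0 := by
  by_cases hv : v ∈ Finset.image mu Finset.univ
  · refine sum_pow_eq_zero (S := Finset.image mu Finset.univ)
      (c := fun v => ∑ t ∈ Finset.univ.filter (fun t => mu t = v), c t) ?_ v hv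
    intro n
    have := Finset.sum_fiberwise_of_maps_to (s := Finset.univ) (g := mu) (t := Finset.image mu Finset.univ)
      (fun x _ => Finset.mem_image_of_mem mu (Finset.mem_univ x)) (fun t => c t * mu t ^ n)
    rw [← h n, ← this]
    refine Finset.sum_congr rfl fun u _ => ?_
    rw [Finset.sum_mul]
    refine Finset.sum_congr rfl fun t ht => ?_
    rw [(Finset.mem_filter.1 ht).2]
  · have : Finset.univ.filter (fun t => mu t = v) = ∅ := by
      refine Finset.filter_eq_empty_iff.2 fun t _ hmu => hv ?_
      exact hmu ▸ Finset.mem_image_of_mem mu (Finset.mem_univ t)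
    simp [this]

lemma w_im (g p : ℝ) : ((g : ℂ) * Complex.exp ((p : ℝ) * Complex.I)).im = g * Real.sin p := by
  simp [Complex.mul_im, Complex.exp_ofReal_mul_I_im, Complex.exp_ofReal_mul_I_re]

lemma w_abs (g p : ℝ) (hg : 0 ≤ g) :
    ‖(g : ℂ) * Complex.exp ((p : ℝ) * Complex.I)‖ = g := by
  rw [norm_mul, Complex.norm_real, Complex.norm_exp_ofReal_mul_I, mul_one, Real.norm_eq_abs, abs_of_nonneg hg]

lemma pair_identity (g p g1 g2 : ℝ) (n : ℕ) :
    ((g1 : ℂ) - g2 * Complex.I) / 2 * ((g : ℂ) * Complex.exp ((p : ℝ) * Complex.I)) ^ n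
      + ((g1 : ℂ) + g2 * Complex.I) / 2 * ((g : ℂ) * Complex.exp (((-p : ℝ)) * Complex.I)) ^ n
    = ((g ^ n * (Real.cos (n * p) * g1 + Real.sin (n * p) * g2) : ℝ) : ℂ) := by
  have h1 : (Complex.exp ((p : ℝ) * Complex.I)) ^ n
      = (Real.cos ((n : ℝ) * p) : ℂ) + (Real.sin ((n : ℝ) * p) : ℂ) * Complex.I := by
    rw [← Complex.exp_nat_mul]
    have : (n : ℂ) * ((p : ℝ) * Complex.I) = (((n : ℝ) * p : ℝ) : ℂ) * Complex.I := by
      push_cast; ring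
    rw [this, Complex.exp_mul_I, ← Complex.ofReal_cos, ← Complex.ofReal_sin]
  have h2 : (Complex.exp (((-p : ℝ)) * Complex.I)) ^ n
      = (Real.cos ((n : ℝ) * p) : ℂ) - (Real.sin ((n : ℝ) * p) : ℂ) * Complex.I := by
    rw [← Complex.exp_nat_mul]
    have : (n : ℂ) * (((-p : ℝ) : ℂ) * Complex.I) = (((n : ℝ) * (-p) : ℝ) : ℂ) * Complex.I := by
      push_cast; ring
    rw [this, Complex.exp_mul_I, ← Complex.ofReal_cos, ← Complex.ofReal_sin,
      mul_neg, Real.cos_neg, Real.sin_neg]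
    push_cast; ring
  rw [mul_pow, mul_pow, h1, h2]
  push_cast
  linear_combination (-(((g : ℂ)) ^ n * (g2 : ℂ) * Complex.sin ((n : ℂ) * (p : ℂ)))) * Complex.I_sq

lemma pair_sum {s : ℕ} (gam phi g1 g2 : Fin s → ℝ) (n : ℕ) :
    (∑ k, ((g1 k : ℂ) - g2 k * Complex.I) / 2
        * ((gam k : ℂ) * Complex.exp ((phi k : ℝ) * Complex.I)) ^ n)
      + (∑ k, ((g1 k : ℂ) + g2 k * Complex.I) / 2
        * ((gam k : ℂ) * Complex.exp (((-phi k : ℝ)) * Complex.I)) ^ n)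
    = ((∑ k, gam k ^ n * (Real.cos (n * phi k) * g1 k + Real.sin (n * phi k) * g2 k) : ℝ) : ℂ) := by
  rw [← Finset.sum_add_distrib, Complex.ofReal_sum]
  exact Finset.sum_congr rfl fun k _ => pair_identity (gam k) (phi k) (g1 k) (g2 k) n

lemma key_match {m r s r' s' : ℕ}
    (lam : Fin r → ℝ) (gam phi : Fin s → ℝ)
    (G0 : Fin r → Matrix (Fin m) (Fin m) ℝ) (G1 G2 : Fin s → Matrix (Fin m) (Fin m) ℝ)
    (lam' : Fin r' → ℝ) (gam' phi' : Fin s' → ℝ)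
    (G0' : Fin r' → Matrix (Fin m) (Fin m) ℝ) (G1' G2' : Fin s' → Matrix (Fin m) (Fin m) ℝ)
    (hgam0 : ∀ k, 0 < gam k) (hphi : ∀ k, 0 < phi k ∧ phi k < Real.pi)
    (hgam0' : ∀ k, 0 < gam' k) (hphi' : ∀ k, 0 < phi' k ∧ phi' k < Real.pi)
    (hlaminj : Function.Injective lam) (hgaminj : Function.Injective gam)
    (hG0 : ∀ k, G0 k ≠ 0) (hG1 : ∀ k, G1 k ≠ 0)
    (hS : ∀ (n : ℕ) (a b : Fin m),
      ((∑ k, lam k ^ n * G0 k a b) +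
        ∑ k, gam k ^ n * (Real.cos (n * phi k) * G1 k a b + Real.sin (n * phi k) * G2 k a b))
      = ((∑ k, lam' k ^ n * G0' k a b) +
        ∑ k, gam' k ^ n * (Real.cos (n * phi' k) * G1' k a b + Real.sin (n * phi' k) * G2' k a b))) :
    (∀ k : Fin r, ∃ j : Fin r', lam k = lam' j) ∧
    (∀ k : Fin s, ∃ j : Fin s', gam k = gam' j) := by
  classical
  set μ : (Fin r ⊕ (Fin s ⊕ Fin s)) ⊕ (Fin r' ⊕ (Fin s' ⊕ Fin s')) → ℂ :=
    Sum.elim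
      (Sum.elim (fun k => ((lam k : ℂ)))
        (Sum.elim (fun k => (gam k : ℂ) * Complex.exp ((phi k : ℝ) * Complex.I))
          (fun k => (gam k : ℂ) * Complex.exp (((-phi k : ℝ)) * Complex.I))))
      (Sum.elim (fun k => ((lam' k : ℂ)))
        (Sum.elim (fun k => (gam' k : ℂ) * Complex.exp ((phi' k : ℝ) * Complex.I))
          (fun k => (gam' k : ℂ) * Complex.exp (((-phi' k : ℝ)) * Complex.I)))) with hμ
  set cc : Fin m → Fin m → (Fin r ⊕ (Fin s ⊕ Fin s)) ⊕ (Fin r' ⊕ (Fin s' ⊕ Fin s')) → ℂ :=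
    fun a b => Sum.elim
      (Sum.elim (fun k => ((G0 k a b : ℂ)))
        (Sum.elim (fun k => ((G1 k a b : ℂ) - G2 k a b * Complex.I) / 2)
          (fun k => ((G1 k a b : ℂ) + G2 k a b * Complex.I) / 2)))
      (Sum.elim (fun k => -((G0' k a b : ℂ)))
        (Sum.elim (fun k => -(((G1' k a b : ℂ) - G2' k a b * Complex.I) / 2))
          (fun k => -(((G1' k a b : ℂ) + G2' k a b * Complex.I) / 2)))) with hcc
  have hC : ∀ (a b : Fin m) (n : ℕ), ∑ t, cc a b t * μ t ^ n = 0 := by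
    intro a b n
    rw [hμ, hcc]
    simp only [Fintype.sum_sum_type, Sum.elim_inl, Sum.elim_inr]
    have E0 : (∑ k, (G0 k a b : ℂ) * ((lam k : ℂ)) ^ n)
        = ((∑ k, lam k ^ n * G0 k a b : ℝ) : ℂ) := by
      rw [Complex.ofReal_sum]
      exact Finset.sum_congr rfl fun k _ => by push_cast; ring
    have E0' : (∑ k, (-((G0' k a b : ℂ))) * ((lam' k : ℂ)) ^ n)
        = -((∑ k, lam' k ^ n * G0' k a b : ℝ) : ℂ) := by
      rw [Complex.ofReal_sum, ← Finset.sum_neg_distrib]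
      exact Finset.sum_congr rfl fun k _ => by push_cast; ring
    have E2 := pair_sum gam phi (fun k => G1 k a b) (fun k => G2 k a b) n
    have E2' : (∑ k, (-(((G1' k a b : ℂ) - G2' k a b * Complex.I) / 2))
          * ((gam' k : ℂ) * Complex.exp ((phi' k : ℝ) * Complex.I)) ^ n)
        + (∑ k, (-(((G1' k a b : ℂ) + G2' k a b * Complex.I) / 2))
          * ((gam' k : ℂ) * Complex.exp (((-phi' k : ℝ)) * Complex.I)) ^ n)
        = -((∑ k, gam' k ^ n *
            (Real.cos (n * phi' k) * G1' k a b + Real.sin (n * phi' k) * G2' k a b) : ℝ) : ℂ) := by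
      rw [← pair_sum gam' phi' (fun k => G1' k a b) (fun k => G2' k a b) n, neg_add,
        ← Finset.sum_neg_distrib, ← Finset.sum_neg_distrib]
      exact congrArg₂ (· + ·) (Finset.sum_congr rfl fun k _ => by ring)
        (Finset.sum_congr rfl fun k _ => by ring)
    have hkeyC : (((∑ k, lam k ^ n * G0 k a b : ℝ)) : ℂ) +
          ((∑ k, gam k ^ n * (Real.cos (n * phi k) * G1 k a b + Real.sin (n * phi k) * G2 k a b) : ℝ) : ℂ)
        = (((∑ k, lam' k ^ n * G0' k a b : ℝ)) : ℂ) +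
          ((∑ k, gam' k ^ n * (Real.cos (n * phi' k) * G1' k a b + Real.sin (n * phi' k) * G2' k a b) : ℝ) : ℂ) := by
      rw [← Complex.ofReal_add, ← Complex.ofReal_add]
      exact_mod_cast congrArg (fun x : ℝ => (x : ℂ)) (hS n a b)
    rw [E0, E2, E0', E2']
    linear_combination hkeyC
  have hFib : ∀ (a b : Fin m) (v : ℂ),
      ∑ t ∈ Finset.univ.filter (fun t => μ t = v), cc a b t = 0 :=
    fun a b v => fiber_sum_eq_zero μ (cc a b) (hC a b) v
  have hImpos : ∀ k : Fin s, 0 < ((gam k : ℂ) * Complex.exp ((phi k : ℝ) * Complex.I)).im := by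
    intro k
    rw [w_im]
    exact mul_pos (hgam0 k) (Real.sin_pos_of_pos_of_lt_pi (hphi k).1 (hphi k).2)
  have hImneg : ∀ k : Fin s, ((gam k : ℂ) * Complex.exp (((-phi k : ℝ)) * Complex.I)).im < 0 := by
    intro k
    rw [w_im, Real.sin_neg, mul_neg]
    exact neg_lt_zero.2 (mul_pos (hgam0 k) (Real.sin_pos_of_pos_of_lt_pi (hphi k).1 (hphi k).2))
  have hImpos' : ∀ k : Fin s', 0 < ((gam' k : ℂ) * Complex.exp ((phi' k : ℝ) * Complex.I)).im := by
    intro k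
    rw [w_im]
    exact mul_pos (hgam0' k) (Real.sin_pos_of_pos_of_lt_pi (hphi' k).1 (hphi' k).2)
  have hImneg' : ∀ k : Fin s', ((gam' k : ℂ) * Complex.exp (((-phi' k : ℝ)) * Complex.I)).im < 0 := by
    intro k
    rw [w_im, Real.sin_neg, mul_neg]
    exact neg_lt_zero.2 (mul_pos (hgam0' k) (Real.sin_pos_of_pos_of_lt_pi (hphi' k).1 (hphi' k).2))
  constructor
  · intro k
    by_contra hcon
    push_neg at hcon
    have hab : ∃ a b, G0 k a b ≠ 0 := by
      by_contra hc; push_neg at hc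
      exact hG0 k (by ext a b; simpa using hc a b)
    obtain ⟨a, b, hab⟩ := hab
    have h0 := hFib a b ((lam k : ℂ))
    rw [Finset.sum_filter, hμ, hcc] at h0
    simp only [Fintype.sum_sum_type, Sum.elim_inl, Sum.elim_inr] at h0
    have z1 : (∑ k' : Fin r, if ((lam k' : ℂ)) = ((lam k : ℂ)) then ((G0 k' a b : ℂ)) else 0)
        = ((G0 k a b : ℂ)) := by
      rw [Finset.sum_eq_single k]
      · rw [if_pos rfl]
      · exact fun k' _ hne => if_neg (fun h => hne (hlaminj (by exact_mod_cast h)))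
      · exact fun h => absurd (Finset.mem_univ k) h
    have z2 : (∑ k' : Fin s, if (gam k' : ℂ) * Complex.exp ((phi k' : ℝ) * Complex.I)
          = ((lam k : ℂ)) then ((G1 k' a b : ℂ) - G2 k' a b * Complex.I) / 2 else 0) = 0 :=
      Finset.sum_eq_zero fun k' _ => if_neg (fun h => by
        have h' := congrArg Complex.im h
        rw [Complex.ofReal_im] at h'
        exact absurd h' (ne_of_gt (hImpos k')))
    have z3 : (∑ k' : Fin s, if (gam k' : ℂ) * Complex.exp (((-phi k' : ℝ)) * Complex.I)
          = ((lam k : ℂ)) then ((G1 k' a b : ℂ) + G2 k' a b * Complex.I) / 2 else 0) = 0 :=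
      Finset.sum_eq_zero fun k' _ => if_neg (fun h => by
        have h' := congrArg Complex.im h
        rw [Complex.ofReal_im] at h'
        exact absurd h' (ne_of_lt (hImneg k')))
    have z4 : (∑ j : Fin r', if ((lam' j : ℂ)) = ((lam k : ℂ)) then -((G0' j a b : ℂ)) else 0) = 0 :=
      Finset.sum_eq_zero fun j _ => if_neg (fun h => hcon j (by exact_mod_cast h.symm))
    have z5 : (∑ j : Fin s', if (gam' j : ℂ) * Complex.exp ((phi' j : ℝ) * Complex.I)
          = ((lam k : ℂ)) then -(((G1' j a b : ℂ) - G2' j a b * Complex.I) / 2) else 0) = 0 :=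
      Finset.sum_eq_zero fun j _ => if_neg (fun h => by
        have h' := congrArg Complex.im h
        rw [Complex.ofReal_im] at h'
        exact absurd h' (ne_of_gt (hImpos' j)))
    have z6 : (∑ j : Fin s', if (gam' j : ℂ) * Complex.exp (((-phi' j : ℝ)) * Complex.I)
          = ((lam k : ℂ)) then -(((G1' j a b : ℂ) + G2' j a b * Complex.I) / 2) else 0) = 0 :=
      Finset.sum_eq_zero fun j _ => if_neg (fun h => by
        have h' := congrArg Complex.im h
        rw [Complex.ofReal_im] at h'
        exact absurd h' (ne_of_lt (hImneg' j)))
    erw [z1, z2, z3, z4, z5, z6] at h0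
    simp only [add_zero, zero_add, Complex.ofReal_eq_zero] at h0
    exact hab h0
  · intro k
    by_contra hcon
    push_neg at hcon
    have hab : ∃ a b, G1 k a b ≠ 0 := by
      by_contra hc; push_neg at hc
      exact hG1 k (by ext a b; simpa using hc a b)
    obtain ⟨a, b, hab⟩ := hab
    set v : ℂ := (gam k : ℂ) * Complex.exp ((phi k : ℝ) * Complex.I) with hv
    have h0 := hFib a b v
    rw [Finset.sum_filter, hμ, hcc] at h0
    simp only [Fintype.sum_sum_type, Sum.elim_inl, Sum.elim_inr] at h0
    have hvim : 0 < v.im := hImpos k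
    have habs : ∀ (g p : ℝ), 0 < g → (g : ℂ) * Complex.exp ((p : ℝ) * Complex.I) = v → g = gam k := by
      intro g p hg h
      have h' := congrArg norm h
      rw [hv, w_abs g p hg.le, w_abs (gam k) (phi k) (hgam0 k).le] at h'
      exact h'
    have z1 : (∑ k' : Fin r, if ((lam k' : ℂ)) = v then ((G0 k' a b : ℂ)) else 0) = 0 :=
      Finset.sum_eq_zero fun k' _ => if_neg (fun h => by
        have h' := congrArg Complex.im h
        rw [Complex.ofReal_im] at h'
        exact absurd h'.symm (ne_of_gt hvim))
    have z2 : (∑ k' : Fin s, if (gam k' : ℂ) * Complex.exp ((phi k' : ℝ) * Complex.I)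
          = v then ((G1 k' a b : ℂ) - G2 k' a b * Complex.I) / 2 else 0)
        = ((G1 k a b : ℂ) - G2 k a b * Complex.I) / 2 := by
      rw [Finset.sum_eq_single k]
      · rw [if_pos hv.symm]
      · exact fun k' _ hne => if_neg (fun h =>
          hne (hgaminj (habs (gam k') (phi k') (hgam0 k') h)))
      · exact fun h => absurd (Finset.mem_univ k) h
    have z3 : (∑ k' : Fin s, if (gam k' : ℂ) * Complex.exp (((-phi k' : ℝ)) * Complex.I)
          = v then ((G1 k' a b : ℂ) + G2 k' a b * Complex.I) / 2 else 0) = 0 :=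
      Finset.sum_eq_zero fun k' _ => if_neg (fun h => by
        have h' := congrArg Complex.im h
        exact absurd h' (ne_of_lt (lt_trans (hImneg k') hvim)))
    have z4 : (∑ j : Fin r', if ((lam' j : ℂ)) = v then -((G0' j a b : ℂ)) else 0) = 0 :=
      Finset.sum_eq_zero fun j _ => if_neg (fun h => by
        have h' := congrArg Complex.im h
        rw [Complex.ofReal_im] at h'
        exact absurd h'.symm (ne_of_gt hvim))
    have z5 : (∑ j : Fin s', if (gam' j : ℂ) * Complex.exp ((phi' j : ℝ) * Complex.I)
          = v then -(((G1' j a b : ℂ) - G2' j a b * Complex.I) / 2) else 0) = 0 :=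
      Finset.sum_eq_zero fun j _ => if_neg (fun h =>
        hcon j (habs (gam' j) (phi' j) (hgam0' j) h).symm)
    have z6 : (∑ j : Fin s', if (gam' j : ℂ) * Complex.exp (((-phi' j : ℝ)) * Complex.I)
          = v then -(((G1' j a b : ℂ) + G2' j a b * Complex.I) / 2) else 0) = 0 :=
      Finset.sum_eq_zero fun j _ => if_neg (fun h => by
        have h' := congrArg Complex.im h
        exact absurd h' (ne_of_lt (lt_trans (hImneg' j) hvim)))
    erw [z1, z2, z3, z4, z5, z6] at h0
    simp only [add_zero, zero_add, div_eq_zero_iff, OfNat.ofNat_ne_zero, or_false] at h0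
    have h1 := congrArg Complex.re h0
    simp [Complex.sub_re, Complex.ofReal_re, Complex.mul_re] at h1
    exact hab h1



/-- identifiability of the order: if the two parameterizations give the
same coefficient matrices `Φ_i` for all `i ≥ 1`, then `r = r'` and `s = s'`. -/
theorem stmt_8 (m r s r' s' : ℕ) (hm : 0 < m)
    (lam : Fin r → ℝ) (gam phi : Fin s → ℝ)
    (G0 : Fin r → Matrix (Fin m) (Fin m) ℝ)
    (G1 G2 : Fin s → Matrix (Fin m) (Fin m) ℝ)
    (lam' : Fin r' → ℝ) (gam' phi' : Fin s' → ℝ)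
    (G0' : Fin r' → Matrix (Fin m) (Fin m) ℝ)
    (G1' G2' : Fin s' → Matrix (Fin m) (Fin m) ℝ)
    (hlam0 : ∀ k, 0 < |lam k|) (hlam1 : ∀ k, |lam k| < 1)
    (hgam0 : ∀ k, 0 < gam k) (hgam1 : ∀ k, gam k < 1)
    (hphi : ∀ k, 0 < phi k ∧ phi k < Real.pi)
    (hlam0' : ∀ k, 0 < |lam' k|) (hlam1' : ∀ k, |lam' k| < 1)
    (hgam0' : ∀ k, 0 < gam' k) (hgam1' : ∀ k, gam' k < 1)
    (hphi' : ∀ k, 0 < phi' k ∧ phi' k < Real.pi)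
    (hlaminj : Function.Injective lam) (hgaminj : Function.Injective gam)
    (hlaminj' : Function.Injective lam') (hgaminj' : Function.Injective gam')
    (hG0 : ∀ k, G0 k ≠ 0) (hG1 : ∀ k, G1 k ≠ 0) (hG2 : ∀ k, G2 k ≠ 0)
    (hG0' : ∀ k, G0' k ≠ 0) (hG1' : ∀ k, G1' k ≠ 0) (hG2' : ∀ k, G2' k ≠ 0)
    (heq : ∀ i : ℕ, 1 ≤ i →
      PhiMat m r s lam gam phi G0 G1 G2 i = PhiMat m r' s' lam' gam' phi' G0' G1' G2' i) :
    r = r' ∧ s = s' := by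
  have hS : ∀ (n : ℕ) (a b : Fin m),
      ((∑ k, lam k ^ n * G0 k a b) +
        ∑ k, gam k ^ n * (Real.cos (n * phi k) * G1 k a b + Real.sin (n * phi k) * G2 k a b))
      = ((∑ k, lam' k ^ n * G0' k a b) +
        ∑ k, gam' k ^ n * (Real.cos (n * phi' k) * G1' k a b + Real.sin (n * phi' k) * G2' k a b)) := by
    intro n a b
    have h := congrFun (congrFun (heq (n + 1) (Nat.le_add_left 1 n)) a) b
    simp only [PhiMat, Nat.add_sub_cancel, Matrix.add_apply, Matrix.sum_apply,
      Matrix.smul_apply, smul_eq_mul] at h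
    exact h
  obtain ⟨hr1, hs1⟩ := key_match lam gam phi G0 G1 G2 lam' gam' phi' G0' G1' G2'
    hgam0 hphi hgam0' hphi' hlaminj hgaminj hG0 hG1 hS
  obtain ⟨hr2, hs2⟩ := key_match lam' gam' phi' G0' G1' G2' lam gam phi G0 G1 G2
    hgam0' hphi' hgam0 hphi hlaminj' hgaminj' hG0' hG1' (fun n a b => (hS n a b).symm)
  choose f hf using hr1
  choose g hg using hr2
  choose f2 hf2 using hs1
  choose g2 hg2 using hs2
  have hfi : Function.Injective f := fun x y h => hlaminj (by rw [hf x, hf y, h])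
  have hgi : Function.Injective g := fun x y h => hlaminj' (by rw [hg x, hg y, h])
  have hf2i : Function.Injective f2 := fun x y h => hgaminj (by rw [hf2 x, hf2 y, h])
  have hg2i : Function.Injective g2 := fun x y h => hgaminj' (by rw [hg2 x, hg2 y, h])
  constructor
  · exact le_antisymm (by simpa using Fintype.card_le_of_injective f hfi)
      (by simpa using Fintype.card_le_of_injective g hgi)
  · exact le_antisymm (by simpa using Fintype.card_le_of_injective f2 hf2i)
      (by simpa using Fintype.card_le_of_injective g2 hg2i)
end

section
/- Assume that λ_1,…,λ_r are pairwise distinct, γ_1,…,γ_s are pairwise distinct, λ′_1,…,λ′_{r′} are pairwise distinct, γ′_1,…,γ′_{s′} are pairwise distinct, and that all of the matrices G_{0,k} (1 ≤ k ≤ r), G_{1,k}, G_{2,k} (1 ≤ k ≤ s), G′_{0,k} (1 ≤ k ≤ r′), G′_{1,k}, G′_{2,k} (1 ≤ k ≤ s′) are nonzero. If Φ_i = Φ′_i for every integer i ≥ 1, then r = r′, s = s′, and there exist a permutation σ of {1,…,r} and a permutation τ of {1,…,s} such that λ_k = λ′_{σ(k)} and G_{0,k} = G′_{0,σ(k)}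 for all 1 ≤ k ≤ r, and γ_k = γ′_{τ(k)}, φ_k = φ′_{τ(k)}, G_{1,k} = G′_{1,τ(k)} and G_{2,k} = G′_{2,τ(k)} for all 1 ≤ k ≤ s (this is the identifiability of the parameters, the core of Proposition 1(ii)). -/
section aux9
open Complex Finset

lemma lemA {S : Finset ℂ} {f : ℂ → ℂ}
    (h : ∀ n : ℕ, ∑ z ∈ S, f z * z ^ n = 0) : ∀ z ∈ S, f z = 0 := by
  intro z hz
  set N := S.card with hN
  let e : Fin N ≃ S := S.equivFin.symm
  let v : Fin N → ℂ := fun i => (e i : ℂ)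
  have hv : Function.Injective v := by
    intro i j hij
    exact e.injective (Subtype.ext hij)
  have hdet : (Matrix.vandermonde v).det ≠ 0 :=
    Matrix.det_vandermonde_ne_zero_iff.mpr hv
  set c : Fin N → ℂ := fun i => f (v i) with hc
  have hsum : ∀ n : ℕ, ∑ i, c i * v i ^ n = 0 := by
    intro n
    rw [← h n]
    rw [← Finset.sum_coe_sort S (fun z => f z * z ^ n)]
    exact Fintype.sum_equiv e _ _ (fun i => rfl)
  have hvec : Matrix.vecMul c (Matrix.vandermonde v) = 0 := by
    funext j
    simpa [Matrix.vecMul, Matrix.vandermonde, dotProduct] using hsum j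
  have hc0 : c = 0 := by
    have hU : IsUnit (Matrix.vandermonde v).det := hdet.isUnit
    have := congrArg (fun w => Matrix.vecMul w (Matrix.vandermonde v)⁻¹) hvec
    simpa [Matrix.vecMul_vecMul, Matrix.mul_nonsing_inv _ hU, Matrix.zero_vecMul] using this
  obtain ⟨i, hi⟩ : ∃ i : Fin N, v i = z := by
    refine ⟨e.symm ⟨z, hz⟩, ?_⟩
    simp [v]
  rw [← hi]
  exact congrFun hc0 i


lemma lemB {m : ℕ} {ι ι' : Type*} [Fintype ι] [Fintype ι']
    {μ : ι → ℂ} {μ' : ι' → ℂ} (hμ : Function.Injective μ) (hμ' : Function.Injective μ')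
    {C : ι → Matrix (Fin m) (Fin m) ℂ} {C' : ι' → Matrix (Fin m) (Fin m) ℂ}
    (hC : ∀ j, C j ≠ 0) (hC' : ∀ j', C' j' ≠ 0)
    (hsum : ∀ n : ℕ, ∑ j, μ j ^ n • C j = ∑ j', μ' j' ^ n • C' j') :
    ∀ j, ∃ j', μ' j' = μ j ∧ C' j' = C j := by
  intro j
  set S : Finset ℂ := (Finset.univ.image μ) ∪ (Finset.univ.image μ') with hS
  set F : ℂ → Matrix (Fin m) (Fin m) ℂ :=
    fun z => ∑ i ∈ Finset.univ.filter (fun i => μ i = z), C i with hF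
  set F' : ℂ → Matrix (Fin m) (Fin m) ℂ :=
    fun z => ∑ i ∈ Finset.univ.filter (fun i => μ' i = z), C' i with hF'
  have hmaps : ∀ i ∈ (Finset.univ : Finset ι), μ i ∈ S := by
    intro i _; simp [hS]
  have hmaps' : ∀ i ∈ (Finset.univ : Finset ι'), μ' i ∈ S := by
    intro i _; simp [hS]
  have key : ∀ z ∈ S, F z = F' z := by
    have h1 : ∀ a b : Fin m, ∀ z ∈ S, (F z - F' z) a b = 0 := by
      intro a b
      have : ∀ z ∈ S, (fun z => (F z - F' z) a b) z = 0 := by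
        apply lemA
        intro n
        have e1 : ∑ z ∈ S, F z a b * z ^ n = ∑ i, C i a b * μ i ^ n := by
          rw [← Finset.sum_fiberwise_of_maps_to hmaps (fun i => C i a b * μ i ^ n)]
          refine Finset.sum_congr rfl fun z _ => ?_
          rw [hF]
          simp only [Matrix.sum_apply, Finset.sum_mul]
          refine Finset.sum_congr rfl fun i hi => ?_
          rw [(Finset.mem_filter.mp hi).2]
        have e1' : ∑ z ∈ S, F' z a b * z ^ n = ∑ i, C' i a b * μ' i ^ n := by
          rw [← Finset.sum_fiberwise_of_maps_to hmaps' (fun i => C' i a b * μ' i ^ n)]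
          refine Finset.sum_congr rfl fun z _ => ?_
          rw [hF']
          simp only [Matrix.sum_apply, Finset.sum_mul]
          refine Finset.sum_congr rfl fun i hi => ?_
          rw [(Finset.mem_filter.mp hi).2]
        have e2 : ∑ i, C i a b * μ i ^ n = ∑ i, C' i a b * μ' i ^ n := by
          have := congrArg (fun M => M a b) (hsum n)
          simpa [Matrix.sum_apply, Matrix.smul_apply, mul_comm] using this
        calc ∑ z ∈ S, (F z - F' z) a b * z ^ n
            = ∑ z ∈ S, (F z a b * z ^ n - F' z a b * z ^ n) := by
              refine Finset.sum_congr rfl fun z _ => ?_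
              simp [Matrix.sub_apply, sub_mul]
          _ = 0 := by rw [Finset.sum_sub_distrib, e1, e1', e2, sub_self]
      exact this
    intro z hz
    ext a b
    have := h1 a b z hz
    simpa [Matrix.sub_apply, sub_eq_zero] using this
  -- now extract
  have hFj : F (μ j) = C j := by
    rw [hF]
    simp only []
    have : Finset.univ.filter (fun i => μ i = μ j) = {j} := by
      ext i
      simp only [Finset.mem_filter, Finset.mem_univ, true_and, Finset.mem_singleton]
      exact ⟨fun h => hμ h, fun h => h ▸ rfl⟩
    rw [this, Finset.sum_singleton]
  have hne : F' (μ j) ≠ 0 := by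
    rw [← key (μ j) (hmaps j (Finset.mem_univ j)), hFj]
    exact hC j
  obtain ⟨j', hj'⟩ : ∃ j', μ' j' = μ j := by
    by_contra hcon
    push_neg at hcon
    apply hne
    rw [hF']
    have : Finset.univ.filter (fun i => μ' i = μ j) = ∅ := by
      ext i; simp [hcon i]
    simp [this]
  refine ⟨j', hj', ?_⟩
  have : Finset.univ.filter (fun i => μ' i = μ j) = {j'} := by
    ext i
    simp only [Finset.mem_filter, Finset.mem_univ, true_and, Finset.mem_singleton]
    exact ⟨fun h => hμ' (h.trans hj'.symm), fun h => h ▸ hj'⟩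
  have hF'j : F' (μ j) = C' j' := by
    rw [hF']; simp only []; rw [this, Finset.sum_singleton]
  rw [← hF'j, key (μ j) (hmaps j (Finset.mem_univ j)) |>.symm, hFj]


lemma expPow (γ φ : ℝ) (n : ℕ) :
    ((γ:ℂ) * Complex.exp (φ * I)) ^ n
      = ((γ ^ n : ℝ) : ℂ) * ((Real.cos (n*φ) : ℝ) + (Real.sin (n*φ) : ℝ) * I) := by
  rw [mul_pow, ← Complex.exp_nat_mul]
  have : ((n : ℂ)) * ((φ:ℂ) * I) = ((n * φ : ℝ) : ℂ) * I := by push_cast; ring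
  rw [this, Complex.exp_mul_I, ← Complex.ofReal_cos, ← Complex.ofReal_sin,
    Complex.ofReal_pow]

lemma expPowNeg (γ φ : ℝ) (n : ℕ) :
    ((γ:ℂ) * Complex.exp (-(φ:ℂ) * I)) ^ n
      = ((γ ^ n : ℝ) : ℂ) * ((Real.cos (n*φ) : ℝ) - (Real.sin (n*φ) : ℝ) * I) := by
  rw [mul_pow, ← Complex.exp_nat_mul]
  have : ((n : ℂ)) * (-(φ:ℂ) * I) = ((-(n * φ) : ℝ) : ℂ) * I := by push_cast; ring
  rw [this, Complex.exp_mul_I, ← Complex.ofReal_cos, ← Complex.ofReal_sin,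
    Real.cos_neg, Real.sin_neg, Complex.ofReal_pow, Complex.ofReal_neg]
  ring

lemma deMoivre (γ φ : ℝ) (n : ℕ) (g1 g2 : ℝ) :
    ((γ:ℂ) * Complex.exp (φ * I)) ^ n * (2⁻¹ * ((g1:ℂ) - I * g2))
      + ((γ:ℂ) * Complex.exp (-(φ:ℂ) * I)) ^ n * (2⁻¹ * ((g1:ℂ) + I * g2))
      = ((γ ^ n * (Real.cos (n*φ) * g1 + Real.sin (n*φ) * g2) : ℝ) : ℂ) := by
  rw [expPow, expPowNeg]
  simp only [Complex.ofReal_mul, Complex.ofReal_add, Complex.ofReal_pow]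
  linear_combination (-((γ:ℂ))^n * (Real.sin (n*φ) : ℝ) * g2) * Complex.I_sq


lemma mode_re (γ φ : ℝ) : ((γ:ℂ) * Complex.exp (φ * I)).re = γ * Real.cos φ := by
  simp [Complex.mul_re, Complex.exp_ofReal_mul_I_re, Complex.exp_ofReal_mul_I_im]

lemma mode_im (γ φ : ℝ) : ((γ:ℂ) * Complex.exp (φ * I)).im = γ * Real.sin φ := by
  simp [Complex.mul_im, Complex.exp_ofReal_mul_I_re, Complex.exp_ofReal_mul_I_im]

lemma neg_coe (φ : ℝ) : (-(φ:ℂ)) = ((-φ : ℝ) : ℂ) := by push_cast; ring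

lemma mode_re_neg (γ φ : ℝ) : ((γ:ℂ) * Complex.exp (-(φ:ℂ) * I)).re = γ * Real.cos φ := by
  rw [neg_coe, mode_re]; simp [Real.cos_neg]

lemma mode_im_neg (γ φ : ℝ) : ((γ:ℂ) * Complex.exp (-(φ:ℂ) * I)).im = -(γ * Real.sin φ) := by
  rw [neg_coe, mode_im]; simp [Real.sin_neg]

lemma polar_eq {γ γ' φ φ' : ℝ} (hγ : 0 < γ) (hγ' : 0 < γ')
    (hφ1 : 0 < φ) (hφ2 : φ < Real.pi) (hφ1' : 0 < φ') (hφ2' : φ' < Real.pi)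
    (hre : γ * Real.cos φ = γ' * Real.cos φ') (him : γ * Real.sin φ = γ' * Real.sin φ') :
    γ = γ' ∧ φ = φ' := by
  have hs := Real.sin_sq_add_cos_sq φ
  have hs' := Real.sin_sq_add_cos_sq φ'
  have e1 : (γ * Real.cos φ)^2 = (γ' * Real.cos φ')^2 := by rw [hre]
  have e2 : (γ * Real.sin φ)^2 = (γ' * Real.sin φ')^2 := by rw [him]
  have hsq : γ^2 = γ'^2 := by linear_combination e1 + e2 - γ^2 * hs + γ'^2 * hs'
  have h3 : (γ - γ') * (γ + γ') = 0 := by linear_combination hsq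
  have hγγ : γ = γ' := by
    rcases mul_eq_zero.mp h3 with h | h
    · linarith
    · linarith
  refine ⟨hγγ, ?_⟩
  have hcos : Real.cos φ = Real.cos φ' := by
    rw [hγγ] at hre
    exact mul_left_cancel₀ hγ'.ne' hre
  exact Real.injOn_cos ⟨hφ1.le, hφ2.le⟩ ⟨hφ1'.le, hφ2'.le⟩ hcos

lemma half_eq {g1 g2 h1 h2 : ℝ}
    (h : (2⁻¹:ℂ) * ((g1:ℂ) - I * g2) = 2⁻¹ * ((h1:ℂ) - I * h2)) : g1 = h1 ∧ g2 = h2 := by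
  have h' : ((g1:ℂ) - I * g2) = ((h1:ℂ) - I * h2) :=
    mul_left_cancel₀ (by norm_num : (2⁻¹:ℂ) ≠ 0) h
  constructor
  · have := congrArg Complex.re h'; simpa using this
  · have := congrArg Complex.im h'; simpa using this


noncomputable def modes (r s : ℕ) (lam : Fin r → ℝ) (gam phi : Fin s → ℝ) :
    Fin r ⊕ Fin s ⊕ Fin s → ℂ :=
  Sum.elim (fun k => (lam k : ℂ))
    (Sum.elim (fun k => (gam k : ℂ) * Complex.exp (phi k * I))
      (fun k => (gam k : ℂ) * Complex.exp (-(phi k : ℂ) * I)))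

noncomputable def coeffs (m r s : ℕ) (G0 : Fin r → Matrix (Fin m) (Fin m) ℝ)
    (G1 G2 : Fin s → Matrix (Fin m) (Fin m) ℝ) :
    Fin r ⊕ Fin s ⊕ Fin s → Matrix (Fin m) (Fin m) ℂ :=
  Sum.elim (fun k => (G0 k).map (Complex.ofReal))
    (Sum.elim
      (fun k => fun a b => 2⁻¹ * (((G1 k a b : ℝ) : ℂ) - I * (G2 k a b : ℝ)))
      (fun k => fun a b => 2⁻¹ * (((G1 k a b : ℝ) : ℂ) + I * (G2 k a b : ℝ))))


lemma modes_inj {r s : ℕ} {lam : Fin r → ℝ} {gam phi : Fin s → ℝ}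
    (hgam0 : ∀ k, 0 < gam k)
    (hphi : ∀ k, 0 < phi k ∧ phi k < Real.pi)
    (hlaminj : Function.Injective lam) (hgaminj : Function.Injective gam) :
    Function.Injective (modes r s lam gam phi) := by
  have hsinpos : ∀ k, 0 < gam k * Real.sin (phi k) := fun k =>
    mul_pos (hgam0 k) (Real.sin_pos_of_pos_of_lt_pi (hphi k).1 (hphi k).2)
  intro j1 j2 h
  rcases j1 with k1 | k1 | k1 <;> rcases j2 with k2 | k2 | k2 <;>
    simp only [modes, Sum.elim_inl, Sum.elim_inr] at h
  · exact congrArg Sum.inl (hlaminj (by exact_mod_cast h))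
  · have := congrArg Complex.im h
    rw [Complex.ofReal_im, mode_im] at this
    exact absurd this.symm (hsinpos k2).ne'
  · have := congrArg Complex.im h
    rw [Complex.ofReal_im, mode_im_neg] at this
    have := this.symm
    exact absurd (neg_eq_zero.mp this) (hsinpos k2).ne'
  · have := congrArg Complex.im h
    rw [Complex.ofReal_im, mode_im] at this
    exact absurd this (hsinpos k1).ne'
  · have hre := congrArg Complex.re h
    have him := congrArg Complex.im h
    rw [mode_re, mode_re] at hre
    rw [mode_im, mode_im] at him
    obtain ⟨hg, -⟩ := polar_eq (hgam0 k1) (hgam0 k2) (hphi k1).1 (hphi k1).2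
      (hphi k2).1 (hphi k2).2 hre him
    exact congrArg (Sum.inr ∘ Sum.inl) (hgaminj hg)
  · have him := congrArg Complex.im h
    rw [mode_im, mode_im_neg] at him
    have hp1 := hsinpos k1
    have hp2 := hsinpos k2
    linarith
  · have := congrArg Complex.im h
    rw [Complex.ofReal_im, mode_im_neg] at this
    exact absurd (neg_eq_zero.mp this) (hsinpos k1).ne'
  · have him := congrArg Complex.im h
    rw [mode_im_neg, mode_im] at him
    have hp1 := hsinpos k1
    have hp2 := hsinpos k2
    linarith
  · have hre := congrArg Complex.re h
    have him := congrArg Complex.im h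
    rw [mode_re_neg, mode_re_neg] at hre
    rw [mode_im_neg, mode_im_neg] at him
    obtain ⟨hg, -⟩ := polar_eq (hgam0 k1) (hgam0 k2) (hphi k1).1 (hphi k1).2
      (hphi k2).1 (hphi k2).2 hre (neg_inj.mp him)
    exact congrArg (Sum.inr ∘ Sum.inr) (hgaminj hg)

lemma coeffs_ne {m r s : ℕ} {G0 : Fin r → Matrix (Fin m) (Fin m) ℝ}
    {G1 G2 : Fin s → Matrix (Fin m) (Fin m) ℝ}
    (hG0 : ∀ k, G0 k ≠ 0) (hG1 : ∀ k, G1 k ≠ 0) :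
    ∀ j, coeffs m r s G0 G1 G2 j ≠ 0 := by
  intro j hj
  rcases j with k | k | k <;> simp only [coeffs, Sum.elim_inl, Sum.elim_inr] at hj
  · refine hG0 k ?_
    ext a b
    have := congrFun (congrFun hj a) b
    simpa [Matrix.map_apply] using this
  · refine hG1 k ?_
    ext a b
    have h2 : (2⁻¹ * (((G1 k a b : ℝ) : ℂ) - I * (G2 k a b : ℝ))) = 0 :=
      congrFun (congrFun hj a) b
    have := congrArg Complex.re h2
    simp [Complex.mul_re] at this
    simpa using this
  · refine hG1 k ?_
    ext a b
    have h2 : (2⁻¹ * (((G1 k a b : ℝ) : ℂ) + I * (G2 k a b : ℝ))) = 0 :=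
      congrFun (congrFun hj a) b
    have := congrArg Complex.re h2
    simp [Complex.mul_re] at this
    simpa using this


lemma keySum (m r s : ℕ) (lam : Fin r → ℝ) (gam phi : Fin s → ℝ)
    (G0 : Fin r → Matrix (Fin m) (Fin m) ℝ)
    (G1 G2 : Fin s → Matrix (Fin m) (Fin m) ℝ) (n : ℕ) :
    ∑ j, modes r s lam gam phi j ^ n • coeffs m r s G0 G1 G2 j
      = (PhiMat m r s lam gam phi G0 G1 G2 (n+1)).map Complex.ofReal := by
  ext a b
  simp only [Matrix.map_apply, PhiMat, Nat.add_sub_cancel, Matrix.add_apply,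
    Matrix.sum_apply, Matrix.smul_apply, smul_eq_mul]
  rw [Fintype.sum_sum_type, Fintype.sum_sum_type]
  simp only [modes, coeffs, Sum.elim_inl, Sum.elim_inr, Matrix.map_apply]
  push_cast
  congr 1
  rw [← Finset.sum_add_distrib]
  refine Finset.sum_congr rfl fun k _ => ?_
  have := deMoivre (gam k) (phi k) n (G1 k a b) (G2 k a b)
  push_cast at this ⊢
  exact this


end aux9

open Complex in
/-- identifiability of the parameters: if the two parameterizations give
the same coefficient matrices `Φ_i` for all `i ≥ 1`, then `r = r'`, `s = s'` and the
parameters agree up to permutations. -/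
theorem stmt_9 (m r s r' s' : ℕ) (hm : 0 < m)
    (lam : Fin r → ℝ) (gam phi : Fin s → ℝ)
    (G0 : Fin r → Matrix (Fin m) (Fin m) ℝ)
    (G1 G2 : Fin s → Matrix (Fin m) (Fin m) ℝ)
    (lam' : Fin r' → ℝ) (gam' phi' : Fin s' → ℝ)
    (G0' : Fin r' → Matrix (Fin m) (Fin m) ℝ)
    (G1' G2' : Fin s' → Matrix (Fin m) (Fin m) ℝ)
    (hlam0 : ∀ k, 0 < |lam k|) (hlam1 : ∀ k, |lam k| < 1)
    (hgam0 : ∀ k, 0 < gam k) (hgam1 : ∀ k, gam k < 1)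
    (hphi : ∀ k, 0 < phi k ∧ phi k < Real.pi)
    (hlam0' : ∀ k, 0 < |lam' k|) (hlam1' : ∀ k, |lam' k| < 1)
    (hgam0' : ∀ k, 0 < gam' k) (hgam1' : ∀ k, gam' k < 1)
    (hphi' : ∀ k, 0 < phi' k ∧ phi' k < Real.pi)
    (hlaminj : Function.Injective lam) (hgaminj : Function.Injective gam)
    (hlaminj' : Function.Injective lam') (hgaminj' : Function.Injective gam')
    (hG0 : ∀ k, G0 k ≠ 0) (hG1 : ∀ k, G1 k ≠ 0) (hG2 : ∀ k, G2 k ≠ 0)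
    (hG0' : ∀ k, G0' k ≠ 0) (hG1' : ∀ k, G1' k ≠ 0) (hG2' : ∀ k, G2' k ≠ 0)
    (heq : ∀ i : ℕ, 1 ≤ i →
      PhiMat m r s lam gam phi G0 G1 G2 i = PhiMat m r' s' lam' gam' phi' G0' G1' G2' i) :
    r = r' ∧ s = s' ∧
      ∃ (σ : Fin r ≃ Fin r') (τ : Fin s ≃ Fin s'),
        (∀ k, lam k = lam' (σ k) ∧ G0 k = G0' (σ k)) ∧
        ∀ k, gam k = gam' (τ k) ∧ phi k = phi' (τ k) ∧
          G1 k = G1' (τ k) ∧ G2 k = G2' (τ k) := by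
  classical
  have hinj1 := modes_inj hgam0 hphi hlaminj hgaminj
  have hinj2 := modes_inj hgam0' hphi' hlaminj' hgaminj'
  have hne1 := coeffs_ne (m := m) (G2 := G2) hG0 hG1
  have hne2 := coeffs_ne (m := m) (G2 := G2') hG0' hG1'
  have hsum : ∀ n : ℕ,
      ∑ j, modes r s lam gam phi j ^ n • coeffs m r s G0 G1 G2 j
        = ∑ j, modes r' s' lam' gam' phi' j ^ n • coeffs m r' s' G0' G1' G2' j := by
    intro n
    rw [keySum, keySum, heq (n+1) (by omega)]
  have fwd := lemB hinj1 hinj2 hne1 hne2 hsum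
  have bwd := lemB hinj2 hinj1 hne2 hne1 (fun n => (hsum n).symm)
  have hsinpos : ∀ k, 0 < gam k * Real.sin (phi k) := fun k =>
    mul_pos (hgam0 k) (Real.sin_pos_of_pos_of_lt_pi (hphi k).1 (hphi k).2)
  have hsinpos' : ∀ k, 0 < gam' k * Real.sin (phi' k) := fun k =>
    mul_pos (hgam0' k) (Real.sin_pos_of_pos_of_lt_pi (hphi' k).1 (hphi' k).2)
  -- σ
  have hσex : ∀ k : Fin r, ∃ k' : Fin r', lam' k' = lam k ∧ G0' k' = G0 k := by
    intro k
    obtain ⟨j', hμ, hC⟩ := fwd (Sum.inl k)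
    rcases j' with k' | k' | k'
    · simp only [modes, coeffs, Sum.elim_inl] at hμ hC
      refine ⟨k', by exact_mod_cast hμ, ?_⟩
      ext a b
      have := congrFun (congrFun hC a) b
      simp only [Matrix.map_apply] at this
      exact_mod_cast this
    · simp only [modes, Sum.elim_inl, Sum.elim_inr] at hμ
      have := congrArg Complex.im hμ
      rw [Complex.ofReal_im, mode_im] at this
      exact absurd this (hsinpos' k').ne'
    · simp only [modes, Sum.elim_inl, Sum.elim_inr] at hμ
      have := congrArg Complex.im hμ
      rw [Complex.ofReal_im, mode_im_neg] at this
      have h0 : gam' k' * Real.sin (phi' k') = 0 := by linarith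
      exact absurd h0 (hsinpos' k').ne'
  have hσexR : ∀ k' : Fin r', ∃ k : Fin r, lam k = lam' k' := by
    intro k'
    obtain ⟨j, hμ, -⟩ := bwd (Sum.inl k')
    rcases j with k | k | k
    · simp only [modes, Sum.elim_inl] at hμ
      exact ⟨k, by exact_mod_cast hμ⟩
    · simp only [modes, Sum.elim_inl, Sum.elim_inr] at hμ
      have := congrArg Complex.im hμ
      rw [Complex.ofReal_im, mode_im] at this
      exact absurd this (hsinpos k).ne'
    · simp only [modes, Sum.elim_inl, Sum.elim_inr] at hμ
      have := congrArg Complex.im hμ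
      rw [Complex.ofReal_im, mode_im_neg] at this
      have h0 : gam k * Real.sin (phi k) = 0 := by linarith
      exact absurd h0 (hsinpos k).ne'
  choose σf hσ1 hσ2 using hσex
  choose σg hg1 using hσexR
  have hσbij : Function.Bijective σf := by
    constructor
    · intro k1 k2 h
      exact hlaminj (by rw [← hσ1 k1, ← hσ1 k2, h])
    · intro k'
      exact ⟨σg k', hlaminj' (by rw [hσ1 (σg k'), hg1 k'])⟩
  -- τ
  have hτex : ∀ k : Fin s, ∃ k' : Fin s',
      gam' k' = gam k ∧ phi' k' = phi k ∧ G1' k' = G1 k ∧ G2' k' = G2 k := by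
    intro k
    obtain ⟨j', hμ, hC⟩ := fwd (Sum.inr (Sum.inl k))
    rcases j' with k' | k' | k'
    · simp only [modes, Sum.elim_inl, Sum.elim_inr] at hμ
      have := congrArg Complex.im hμ
      rw [Complex.ofReal_im, mode_im] at this
      exact absurd this.symm (hsinpos k).ne'
    · simp only [modes, coeffs, Sum.elim_inl, Sum.elim_inr] at hμ hC
      have hre := congrArg Complex.re hμ
      have him := congrArg Complex.im hμ
      rw [mode_re, mode_re] at hre
      rw [mode_im, mode_im] at him
      obtain ⟨hg, hp⟩ := polar_eq (hgam0' k') (hgam0 k) (hphi' k').1 (hphi' k').2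
        (hphi k).1 (hphi k).2 hre him
      have hent : ∀ a b, G1' k' a b = G1 k a b ∧ G2' k' a b = G2 k a b := by
        intro a b
        exact half_eq (congrFun (congrFun hC a) b)
      exact ⟨k', hg, hp, by ext a b; exact (hent a b).1, by ext a b; exact (hent a b).2⟩
    · simp only [modes, Sum.elim_inl, Sum.elim_inr] at hμ
      have := congrArg Complex.im hμ
      rw [mode_im_neg, mode_im] at this
      have hp1 := hsinpos k
      have hp2 := hsinpos' k'
      linarith
  have hτexR : ∀ k' : Fin s', ∃ k : Fin s, gam k = gam' k' := by
    intro k'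
    obtain ⟨j, hμ, -⟩ := bwd (Sum.inr (Sum.inl k'))
    rcases j with k | k | k
    · simp only [modes, Sum.elim_inl, Sum.elim_inr] at hμ
      have := congrArg Complex.im hμ
      rw [Complex.ofReal_im, mode_im] at this
      exact absurd this.symm (hsinpos' k').ne'
    · simp only [modes, Sum.elim_inl, Sum.elim_inr] at hμ
      have hre := congrArg Complex.re hμ
      have him := congrArg Complex.im hμ
      rw [mode_re, mode_re] at hre
      rw [mode_im, mode_im] at him
      obtain ⟨hg, -⟩ := polar_eq (hgam0 k) (hgam0' k') (hphi k).1 (hphi k).2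
        (hphi' k').1 (hphi' k').2 hre him
      exact ⟨k, hg⟩
    · simp only [modes, Sum.elim_inl, Sum.elim_inr] at hμ
      have := congrArg Complex.im hμ
      rw [mode_im_neg, mode_im] at this
      have hp1 := hsinpos k
      have hp2 := hsinpos' k'
      linarith
  choose τf hτ1 hτ2 hτ3 hτ4 using hτex
  choose τg htg1 using hτexR
  have hτbij : Function.Bijective τf := by
    constructor
    · intro k1 k2 h
      exact hgaminj (by rw [← hτ1 k1, ← hτ1 k2, h])
    · intro k'
      exact ⟨τg k', hgaminj' (by rw [hτ1 (τg k'), htg1 k'])⟩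
  let σ := Equiv.ofBijective σf hσbij
  let τ := Equiv.ofBijective τf hτbij
  refine ⟨by simpa using Fintype.card_congr σ, by simpa using Fintype.card_congr τ, σ, τ,
    fun k => ⟨(hσ1 k).symm, (hσ2 k).symm⟩,
    fun k => ⟨(hτ1 k).symm, (hτ2 k).symm, (hτ3 k).symm, (hτ4 k).symm⟩⟩
end

section
/- Let n be a positive integer and let A be an n×n real matrix all of whose entries are nonnegative. Assume that every element of the spectrum of A viewed as an n×n complex matrix (i.e., every complex eigenvalue of A) has modulus strictly less than 1. Then there exists a vector ν ∈ ℝ^n with all entries strictly positive such that every entry of the vector (I_n − Aᵀ) ν is strictly positive, where I_n is the n×n identity matrix and Aᵀ is the transpose of A. -/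
open Matrix Filter Finset
open scoped ENNReal NNReal

attribute [local instance] Matrix.linftyOpNormedRing Matrix.linftyOpNormedAlgebra

private lemma entry_le_linfty_aux {m : Type*} [Fintype m] [DecidableEq m] (M : Matrix m m ℂ) (i j : m) :
    ‖M i j‖ ≤ ‖M‖ := by
  have h : ‖M i j‖₊ ≤ ‖M‖₊ := by
    rw [Matrix.linfty_opNNNorm_def]
    exact le_trans (Finset.single_le_sum (f := fun j => ‖M i j‖₊)
      (fun _ _ => zero_le) (Finset.mem_univ j)) (Finset.le_sup (f := fun i => ∑ j, ‖M i j‖₊) (Finset.mem_univ i))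
  exact_mod_cast h

/-- if `A` is a nonnegative `n×n` real matrix whose complex spectrum lies
strictly inside the unit disc, then there is a strictly positive vector `ν` such that
`(I − Aᵀ) ν` is strictly positive. -/
theorem stmt_14 (n : ℕ) (hn : 0 < n) (A : Matrix (Fin n) (Fin n) ℝ)
    (hA : ∀ i j, 0 ≤ A i j)
    (hspec : ∀ μ ∈ spectrum ℂ (A.map (algebraMap ℝ ℂ)), ‖μ‖ < 1) :
    ∃ ν : Fin n → ℝ, (∀ i, 0 < ν i) ∧
      ∀ i, 0 < ((1 - A.transpose).mulVec ν) i := by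
  classical
  haveI : Nonempty (Fin n) := ⟨⟨0, hn⟩⟩
  haveI : CompleteSpace (Matrix (Fin n) (Fin n) ℂ) := FiniteDimensional.complete ℂ _
  set B : Matrix (Fin n) (Fin n) ℂ := A.map (algebraMap ℝ ℂ) with hBdef
  -- powers of A have nonnegative entries
  have hpow_nonneg : ∀ k : ℕ, ∀ i j, 0 ≤ (A ^ k) i j := by
    intro k
    induction k with
    | zero =>
      intro i j
      rw [pow_zero]
      by_cases h : i = j <;> simp [Matrix.one_apply, h]
    | succ k ih =>
      intro i j
      rw [pow_succ, Matrix.mul_apply]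
      exact Finset.sum_nonneg fun l _ => mul_nonneg (ih i l) (hA l j)
  -- entries of A^k are bounded by ‖B^k‖
  have hmap : ∀ k : ℕ, B ^ k = (A ^ k).map (algebraMap ℝ ℂ) := by
    intro k
    simp only [hBdef, ← RingHom.mapMatrix_apply, ← map_pow]
  have hentry : ∀ k : ℕ, ∀ i j, (A ^ k) i j ≤ ‖B ^ k‖ := by
    intro k i j
    calc (A ^ k) i j ≤ |(A ^ k) i j| := le_abs_self _
      _ = ‖(B ^ k) i j‖ := by
          rw [hmap k]
          simp [Matrix.map_apply, Complex.norm_real]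
      _ ≤ ‖B ^ k‖ := entry_le_linfty_aux _ i j
  -- spectral radius strictly below 1
  have hρ : spectralRadius ℂ B < 1 := by
    have hne : (spectrum ℂ B).Nonempty := spectrum.nonempty B
    have h := spectrum.spectralRadius_lt_of_forall_lt_of_nonempty hne (r := 1)
      (fun k hk => by
        have := hspec k hk
        exact_mod_cast this)
    simpa using h
  -- Gelfand's formula: find N ≥ 1 with ‖B^N‖ < 1
  have hgel := spectrum.pow_nnnorm_pow_one_div_tendsto_nhds_spectralRadius B
  have hev : ∀ᶠ k : ℕ in atTop, (‖B ^ k‖₊ : ℝ≥0∞) ^ (1 / (k : ℝ)) < 1 :=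
    hgel.eventually_lt_const hρ
  obtain ⟨N, hN1, hNlt⟩ := ((eventually_ge_atTop 1).and hev).exists
  have hBN : ‖B ^ N‖ < 1 := by
    by_contra h
    push_neg at h
    have h1 : (1 : ℝ≥0∞) ≤ (‖B ^ N‖₊ : ℝ≥0∞) := by
      exact_mod_cast h
    have h2 := ENNReal.rpow_le_rpow h1 (by positivity : (0:ℝ) ≤ 1 / (N : ℝ))
    rw [ENNReal.one_rpow] at h2
    exact absurd hNlt (not_lt.2 h2)
  -- find m with ‖B^N‖ ^ m < 1/(n+1)
  obtain ⟨m, hm⟩ := exists_pow_lt_of_lt_one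
    (show (0:ℝ) < 1 / (n + 1) by positivity) hBN
  have hm0 : 0 < m := by
    rcases Nat.eq_zero_or_pos m with h | h
    · exfalso
      rw [h, pow_zero] at hm
      have : (1:ℝ) / (n + 1) ≤ 1 := by
        rw [div_le_one (by positivity)]
        have : (1:ℝ) ≤ (n:ℝ) + 1 := by
          have : (0:ℝ) ≤ (n:ℝ) := Nat.cast_nonneg n
          linarith
        exact this
      linarith
    · exact h
  set K : ℕ := N * m with hKdef
  have hK0 : 0 < K := Nat.mul_pos hN1 hm0
  -- column sums of A^K are < 1
  have hcol : ∀ i, ∑ j, (A ^ K) j i < 1 := by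
    intro i
    have hBK : ‖B ^ K‖ ≤ ‖B ^ N‖ ^ m := by
      rw [hKdef, pow_mul]
      exact norm_pow_le' _ hm0
    calc ∑ j, (A ^ K) j i ≤ ∑ _j : Fin n, ‖B ^ K‖ :=
          Finset.sum_le_sum fun j _ => hentry K j i
      _ = n * ‖B ^ K‖ := by simp [Finset.sum_const, Finset.card_univ, nsmul_eq_mul]
      _ ≤ n * (‖B ^ N‖ ^ m) := by
          apply mul_le_mul_of_nonneg_left hBK (Nat.cast_nonneg n)
      _ ≤ n * (1 / (n + 1)) := by
          apply mul_le_mul_of_nonneg_left (le_of_lt hm) (Nat.cast_nonneg n)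
      _ < 1 := by
          rw [mul_one_div, div_lt_one (by positivity)]
          linarith
  -- the vector
  set S : Matrix (Fin n) (Fin n) ℝ := ∑ k ∈ Finset.range K, A.transpose ^ k with hSdef
  have hT : ∀ k : ℕ, ∀ i j, (A.transpose ^ k) i j = (A ^ k) j i := by
    intro k i j
    rw [← Matrix.transpose_pow]
    rfl
  refine ⟨S *ᵥ (fun _ => 1), ?_, ?_⟩
  · intro i
    have hv : (S *ᵥ (fun _ => (1:ℝ))) i
        = ∑ k ∈ Finset.range K, ∑ j, (A.transpose ^ k) i j := by
      simp [Matrix.mulVec, dotProduct, hSdef, Matrix.sum_apply]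
      exact Finset.sum_comm
    rw [hv]
    have h0 : (0:ℝ) < ∑ j, (A.transpose ^ 0) i j := by
      rw [pow_zero]
      simp [Matrix.one_apply]
    refine lt_of_lt_of_le h0 ?_
    exact Finset.single_le_sum (f := fun k => ∑ j, (A.transpose ^ k) i j)
      (fun k _ => Finset.sum_nonneg fun j _ => by rw [hT]; exact hpow_nonneg k j i)
      (Finset.mem_range.2 hK0)
  · intro i
    have hgeo : (1 - A.transpose) * S = 1 - A.transpose ^ K := by
      have h := mul_geom_sum A.transpose K
      have h2 : (1 - A.transpose) * S = -((A.transpose - 1) * S) := by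
        rw [hSdef]; noncomm_ring
      rw [h2, hSdef, h, neg_sub]
    have hv : ((1 - A.transpose).mulVec (S *ᵥ fun _ => (1:ℝ))) i
        = ((1 - A.transpose ^ K) *ᵥ fun _ => (1:ℝ)) i := by
      rw [Matrix.mulVec_mulVec, hgeo]
    rw [hv]
    have hval : ((1 - A.transpose ^ K) *ᵥ fun _ => (1:ℝ)) i
        = 1 - ∑ j, (A ^ K) j i := by
      simp [Matrix.mulVec, dotProduct, Matrix.sub_apply, Matrix.one_apply,
        Finset.sum_sub_distrib, hT]
    rw [hval]
    linarith [hcol i]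
end
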